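/- arXiv:1409.6463 — 15 statements merged into one kernel-verified Lean document; each statement's English description precedes it below -/
import Mathlib

section
/- Let (E,d) be a metric space, let (x_n) be a sequence in E and let x ∈ E. If x is a polar limit of (x_n), then (x_n) Δ-converges to x. -/
open Filter Metric ENNReal MeasureTheory

noncomputable section

variable {E : Type*} [MetricSpace E]

/-- A sequence `x` Δ-converges to `p`: for every subsequence and every `y`,
`limsup d(x_{k_n}, p) ≤ limsup d(x_{k_n}, y)`. -/
def DeltaConv (x : ℕ → E) (p : E) : Prop :=
  ∀ k : ℕ → ℕ, StrictMono k → ∀ y : E,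
    Filter.limsup (fun n => edist (x (k n)) p) Filter.atTop ≤
      Filter.limsup (fun n => edist (x (k n)) y) Filter.atTop

/-- A sequence `x` strong-Δ converges to `p`: `lim d(x_n,p)` exists and for every `y`,
`lim d(x_n,p) ≤ liminf d(x_n,y)`. -/
def StrongDeltaConv (x : ℕ → E) (p : E) : Prop :=
  ∃ r : ℝ, Filter.Tendsto (fun n => dist (x n) p) Filter.atTop (nhds r) ∧
    ∀ y : E, r ≤ Filter.liminf (fun n => dist (x n) y) Filter.atTop

/-- `p` is a polar limit of the sequence `x`: for every `y ≠ p`, eventually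
`d(x_n,p) < d(x_n,y)`. -/
def PolarLim (x : ℕ → E) (p : E) : Prop :=
  ∀ y : E, y ≠ p → ∃ M : ℕ, ∀ n ≥ M, dist (x n) p < dist (x n) y

/-- `c` is an asymptotic center of the sequence `x`: it minimizes
`I(y) = limsup d(x_n, y)`. -/
def AsympCenter (x : ℕ → E) (c : E) : Prop :=
  ∀ y : E, Filter.limsup (fun n => dist (x n) c) Filter.atTop ≤
    Filter.limsup (fun n => dist (x n) y) Filter.atTop

/-- A metric space is Δ-complete if every bounded sequence admits an asymptotic center. -/
def DeltaComplete (E : Type*) [MetricSpace E] : Prop :=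
  ∀ x : ℕ → E, Bornology.IsBounded (Set.range x) → ∃ c : E, AsympCenter x c

/-- The Chebyshev radius of a set `X`: `inf_z sup_{w ∈ X} d(z,w)`. -/
def chebyshevRadius (X : Set E) : ℝ≥0∞ :=
  ⨅ z : E, ⨆ w ∈ X, edist z w

/-- A metric space is a uniform SR (Staples rotund) space if there is
`δ : (0,∞)² → (0,∞)` such that for all `r, d̄ > 0` and all `x, y` with `d(x,y) ≥ d̄`,
the Chebyshev radius of `B_{r+δ}(x) ∩ B_{r+δ}(y)` is at most `r − δ`. -/
def IsUniformSR (E : Type*) [MetricSpace E] : Prop :=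
  ∃ δ : ℝ → ℝ → ℝ,
    (∀ r dbar : ℝ, 0 < r → 0 < dbar → 0 < δ r dbar) ∧
    ∀ r dbar : ℝ, 0 < r → 0 < dbar → ∀ x y : E, dbar ≤ dist x y →
      chebyshevRadius
          (Metric.closedBall x (r + δ r dbar) ∩ Metric.closedBall y (r + δ r dbar)) ≤
        ENNReal.ofReal (r - δ r dbar)

/-- a polar limit is a Δ-limit. -/
theorem stmt_2 (x : ℕ → E) (p : E) (h : PolarLim x p) : DeltaConv x p := by
  intro k hk y
  rcases eq_or_ne y p with rfl | hy
  · exact le_rfl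
  · obtain ⟨M, hM⟩ := h y hy
    refine Filter.limsup_le_limsup ?_
    filter_upwards [Filter.eventually_ge_atTop M] with n hn
    have hkn : M ≤ k n := hn.trans (hk.le_apply)
    have := (hM (k n) hkn).le
    rw [edist_dist, edist_dist]
    exact ENNReal.ofReal_le_ofReal this
end
end

section
/- Let (E,d) be a metric space, let (x_n) be a bounded sequence in E and let x ∈ E. If (x_n) Δ-converges to x, then (x_n) admits a subsequence which strong-Δ converges to x. -/
open Filter Metric ENNReal MeasureTheory

noncomputable section

variable {E : Type*} [MetricSpace E]

/-- Any real sequence bounded above and below has a subsequence tending to its liminf. -/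
lemma exists_subseq_tendsto_liminf (u : ℕ → ℝ)
    (h1 : Filter.IsBoundedUnder (· ≤ ·) Filter.atTop u)
    (h2 : Filter.IsBoundedUnder (· ≥ ·) Filter.atTop u) :
    ∃ k : ℕ → ℕ, StrictMono k ∧
      Filter.Tendsto (fun n => u (k n)) Filter.atTop (nhds (Filter.liminf u Filter.atTop)) := by
  set L := Filter.liminf u Filter.atTop with hL
  have hcl : MapClusterPt L atTop u := by
    rw [mapClusterPt_iff_frequently]
    intro s hs
    obtain ⟨ε, hε, hball⟩ := Metric.mem_nhds_iff.mp hs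
    have hfreq : ∃ᶠ n in atTop, u n < L + ε :=
      frequently_lt_of_liminf_lt h1.isCoboundedUnder_ge (by linarith)
    have hev : ∀ᶠ n in atTop, L - ε < u n :=
      eventually_lt_of_lt_liminf (by linarith) h2
    refine (hfreq.and_eventually hev).mono fun n ⟨hn1, hn2⟩ => hball ?_
    rw [Metric.mem_ball, Real.dist_eq, abs_lt]
    constructor <;> linarith
  obtain ⟨ψ, hψ, hψt⟩ := TopologicalSpace.FirstCountableTopology.tendsto_subseq hcl
  exact ⟨ψ, hψ, hψt⟩

/-- a bounded Δ-convergent sequence has a subsequence which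
strong-Δ converges to the same point. -/
theorem stmt_5 (x : ℕ → E) (p : E) (hb : Bornology.IsBounded (Set.range x))
    (h : DeltaConv x p) :
    ∃ k : ℕ → ℕ, StrictMono k ∧ StrongDeltaConv (fun n => x (k n)) p := by
  obtain ⟨C, hC⟩ := (Metric.isBounded_iff_subset_closedBall p).mp hb
  have hCd : ∀ n, dist (x n) p ≤ C := fun n =>
    (Metric.mem_closedBall.mp (hC ⟨n, rfl⟩))
  have hbu : ∀ y : E, IsBoundedUnder (· ≤ ·) atTop (fun n => dist (x n) y) := by
    intro y
    refine ⟨C + dist p y, eventually_atTop.mpr ⟨0, fun n _ => ?_⟩⟩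
    exact (dist_triangle (x n) p y).trans (add_le_add_left (hCd n) _)
  have hbl : ∀ y : E, IsBoundedUnder (· ≥ ·) atTop (fun n => dist (x n) y) := fun y =>
    ⟨0, eventually_atTop.mpr ⟨0, fun n _ => dist_nonneg⟩⟩
  -- subsequence tending to liminf, for any bounded real sequence
  obtain ⟨k, hk, hkt⟩ := exists_subseq_tendsto_liminf (fun n => dist (x n) p)
    (hbu p) (hbl p)
  set r := liminf (fun n => dist (x n) p) atTop with hr
  refine ⟨k, hk, r, hkt, fun y => ?_⟩
  set v : ℕ → ℝ := fun n => dist (x (k n)) y with hv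
  have hvu : IsBoundedUnder (· ≤ ·) atTop v := by
    refine ⟨C + dist p y, eventually_atTop.mpr ⟨0, fun n _ => ?_⟩⟩
    exact (dist_triangle (x (k n)) p y).trans (add_le_add_left (hCd _) _)
  have hvl : IsBoundedUnder (· ≥ ·) atTop v :=
    ⟨0, eventually_atTop.mpr ⟨0, fun n _ => dist_nonneg⟩⟩
  set L := liminf v atTop with hL
  obtain ⟨m, hm, hmt⟩ := exists_subseq_tendsto_liminf v hvu hvl
  have key := h (k ∘ m) (hk.comp hm) y
  have h1 : Tendsto (fun n => dist (x (k (m n))) p) atTop (nhds r) :=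
    hkt.comp hm.tendsto_atTop
  have h1' : Tendsto (fun n => edist (x (k (m n))) p) atTop (nhds (ENNReal.ofReal r)) := by
    simpa [edist_dist] using ENNReal.tendsto_ofReal h1
  have h2' : Tendsto (fun n => edist (x (k (m n))) y) atTop (nhds (ENNReal.ofReal L)) := by
    simpa [edist_dist] using ENNReal.tendsto_ofReal hmt
  simp only [Function.comp] at key
  rw [h1'.limsup_eq, h2'.limsup_eq] at key
  have hL0 : 0 ≤ L := by
    have := hmt
    exact le_of_tendsto_of_tendsto' tendsto_const_nhds hmt fun n => dist_nonneg
  exact (ENNReal.ofReal_le_ofReal_iff hL0).mp key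
end
end

section
/- Let (E,d) be a metric space, let x ∈ E and let (x_n) be a sequence in E whose range is totally bounded (in particular, this holds if (x_n) is a Cauchy sequence). If (x_n) Δ-converges to x, then d(x_n,x) → 0, i.e. (x_n) converges to x in the metric. -/
open Filter Metric ENNReal MeasureTheory

noncomputable section

variable {E : Type*} [MetricSpace E]

/-- A sequence with totally bounded range has a Cauchy subsequence. -/
lemma exists_cauchy_subseq (u : ℕ → E) (htb : TotallyBounded (Set.range u)) :
    ∃ φ : ℕ → ℕ, StrictMono φ ∧ CauchySeq (u ∘ φ) := by
  set f : E → UniformSpace.Completion E := (↑·)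
  have hiso : Isometry f := UniformSpace.Completion.coe_isometry
  have htb' : TotallyBounded (f '' Set.range u) :=
    htb.image hiso.uniformContinuous
  have hK : IsCompact (closure (f '' Set.range u)) :=
    TotallyBounded.isCompact_of_isClosed htb'.closure isClosed_closure
  have hmem : ∀ n, f (u n) ∈ closure (f '' Set.range u) := fun n =>
    subset_closure ⟨u n, ⟨n, rfl⟩, rfl⟩
  obtain ⟨q, -, φ, hφ, hconv⟩ := hK.tendsto_subseq hmem
  refine ⟨φ, hφ, ?_⟩
  have hc : CauchySeq (f ∘ u ∘ φ) := hconv.cauchySeq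
  have : Cauchy (Filter.map f (Filter.map (u ∘ φ) Filter.atTop)) := by
    rwa [Filter.map_map]
  exact hiso.isUniformInducing.cauchy_map_iff.mp this

/-- a Δ-convergent sequence with totally bounded range converges in metric. -/
theorem stmt_6 (x : ℕ → E) (p : E) (htb : TotallyBounded (Set.range x))
    (h : DeltaConv x p) :
    Filter.Tendsto (fun n => dist (x n) p) Filter.atTop (nhds 0) := by
  rw [← tendsto_iff_dist_tendsto_zero]
  apply Filter.tendsto_of_subseq_tendsto
  intro ns hns
  -- extract a strictly monotone subsequence of ns
  obtain ⟨φ, hφ, hns'⟩ := Filter.strictMono_subseq_of_tendsto_atTop hns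
  -- extract a Cauchy sub-subsequence
  have htb' : TotallyBounded (Set.range (x ∘ ns ∘ φ)) :=
    htb.subset (Set.range_comp_subset_range _ _)
  obtain ⟨ψ, hψ, hcauchy⟩ := exists_cauchy_subseq (x ∘ ns ∘ φ) htb'
  refine ⟨φ ∘ ψ, ?_⟩
  set k : ℕ → ℕ := ns ∘ φ ∘ ψ with hk
  have hkmono : StrictMono k := (hns'.comp hψ)
  have hkey := h k hkmono
  -- show limsup edist (x (k n)) p = 0
  have hlim : Filter.limsup (fun n => edist (x (k n)) p) Filter.atTop = 0 := by
    refine le_antisymm ?_ zero_le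
    have : ∀ ε : ℝ≥0∞, 0 < ε →
        Filter.limsup (fun n => edist (x (k n)) p) Filter.atTop ≤ ε := by
      intro ε hε
      obtain ⟨N, hN⟩ := EMetric.cauchySeq_iff.mp hcauchy ε hε
      refine le_trans (hkey (x (k N))) ?_
      refine Filter.limsup_le_of_le (by isBoundedDefault) ?_
      filter_upwards [Filter.eventually_ge_atTop N] with n hn
      exact le_of_lt (hN n hn N le_rfl)
    exact le_of_forall_gt_imp_ge_of_dense fun ε hε => this ε hε
  -- conclude tendsto
  have htendsto : Filter.Tendsto (fun n => x (k n)) Filter.atTop (nhds p) := by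
    rw [EMetric.tendsto_atTop]
    intro ε hε
    have : Filter.limsup (fun n => edist (x (k n)) p) Filter.atTop < ε := by
      rw [hlim]; exact hε
    exact Filter.eventually_atTop.mp (Filter.eventually_lt_of_limsup_lt this)
  exact htendsto
end
end

section
/- Let (E,d) be a Δ-complete metric space. Then every bounded sequence in E has a subsequence which strong-Δ converges to some point of E. -/
open Filter Metric ENNReal MeasureTheory

noncomputable section

variable {E : Type*} [MetricSpace E]

namespace SDCaux

noncomputable def rho (x : ℕ → E) : ℝ≥0∞ :=
  ⨅ z : E, Filter.limsup (fun n => edist (x n) z) Filter.atTop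

lemma limsup_comp_le {u : ℕ → ℝ≥0∞} {j : ℕ → ℕ} (hj : StrictMono j) :
    Filter.limsup (fun n => u (j n)) Filter.atTop ≤ Filter.limsup u Filter.atTop := by
  have h1 : Filter.limsup (u ∘ j) Filter.atTop = Filter.limsup u (Filter.map j Filter.atTop) :=
    Filter.limsup_comp u j Filter.atTop
  have h2 : Filter.map j Filter.atTop ≤ Filter.atTop := hj.tendsto_atTop
  calc Filter.limsup (fun n => u (j n)) Filter.atTop
      = Filter.limsup u (Filter.map j Filter.atTop) := h1
    _ ≤ Filter.limsup u Filter.atTop := Filter.limsup_le_limsup_of_le h2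

lemma rho_comp_le (x : ℕ → E) {j : ℕ → ℕ} (hj : StrictMono j) :
    rho (fun n => x (j n)) ≤ rho x :=
  le_iInf fun z => le_trans (iInf_le _ z) (limsup_comp_le hj)

lemma rho_tail (x : ℕ → E) (m : ℕ) : rho (fun n => x (n + m)) = rho x :=
  iInf_congr fun z => Filter.limsup_nat_add (fun n => edist (x n) z) m

lemma exists_stable (x : ℕ → E) (hfin : rho x ≠ ⊤) :
    ∃ k : ℕ → ℕ, StrictMono k ∧ ∀ j : ℕ → ℕ, StrictMono j →
      rho (fun n => x (k (j n))) = rho (fun n => x (k n)) := by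
  classical
  let T := {k : ℕ → ℕ // StrictMono k}
  have hTne : Nonempty T := ⟨⟨id, strictMono_id⟩⟩
  let rinf : T → ℝ≥0∞ := fun k => ⨅ j : T, rho (fun n => x (k.1 (j.1 n)))
  have hrho_fin : ∀ k : T, rho (fun n => x (k.1 n)) ≠ ⊤ := fun k =>
    ne_top_of_le_ne_top hfin (rho_comp_le x k.2)
  have hrinf_le : ∀ k : T, rinf k ≤ rho (fun n => x (k.1 n)) := fun k =>
    iInf_le _ (⟨id, strictMono_id⟩ : T)
  have hrinf_fin : ∀ k : T, rinf k ≠ ⊤ := fun k =>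
    ne_top_of_le_ne_top (hrho_fin k) (hrinf_le k)
  have step : ∀ (k : T) (m : ℕ), ∃ j : T,
      rho (fun n => x (k.1 (j.1 n))) < rinf k + ((m : ℝ≥0∞) + 1)⁻¹ := by
    intro k m
    have hpos : (0 : ℝ≥0∞) < ((m : ℝ≥0∞) + 1)⁻¹ := by
      rw [ENNReal.inv_pos]
      exact ENNReal.add_ne_top.2 ⟨ENNReal.natCast_ne_top m, one_ne_top⟩
    have h1 : rinf k < rinf k + ((m : ℝ≥0∞) + 1)⁻¹ :=
      ENNReal.lt_add_right (hrinf_fin k) hpos.ne'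
    exact iInf_lt_iff.1 h1
  choose F hF using step
  -- the nested subsequences
  let K : ℕ → T := fun m => Nat.rec (motive := fun _ => T) ⟨id, strictMono_id⟩
    (fun m k => ⟨fun n => k.1 ((F k m).1 n), k.2.comp (F k m).2⟩) m
  let g : ℕ → ℕ → ℕ := fun m => (F (K m) m).1
  have hg_mono : ∀ m, StrictMono (g m) := fun m => (F (K m) m).2
  have hKs : ∀ m n, (K (m + 1)).1 n = (K m).1 (g m n) := fun m n => rfl
  have hFlt : ∀ m, rho (fun n => x ((K (m + 1)).1 n)) < rinf (K m) + ((m : ℝ≥0∞) + 1)⁻¹ :=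
    fun m => hF (K m) m
  -- the transition maps C m q with K q = K m ∘ C m q for m ≤ q
  let C : ℕ → ℕ → ℕ → ℕ := fun m q => Nat.rec (motive := fun _ => ℕ → ℕ) id
    (fun q c => if m ≤ q then fun n => c (g q n) else c) q
  have hC_succ_ge : ∀ m q, m ≤ q → ∀ n, C m (q + 1) n = C m q (g q n) := by
    intro m q h n
    simp only [C, Nat.rec_add_one, if_pos h]
  have hC_succ_lt : ∀ m q, ¬ m ≤ q → C m (q + 1) = C m q := by
    intro m q h
    simp only [C, Nat.rec_add_one, if_neg h]
  have hC_mono : ∀ m q, StrictMono (C m q) := by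
    intro m q
    induction q with
    | zero => exact strictMono_id
    | succ q ih =>
      by_cases h : m ≤ q
      · have : C m (q + 1) = fun n => C m q (g q n) := funext (hC_succ_ge m q h)
        rw [this]; exact ih.comp (hg_mono q)
      · rw [hC_succ_lt m q h]; exact ih
  have hC_id : ∀ m q, q ≤ m → C m q = id := by
    intro m q h
    induction q with
    | zero => rfl
    | succ q ih =>
      rw [hC_succ_lt m q (by omega)]
      exact ih (by omega)
  have hC_eq : ∀ m q, m ≤ q → ∀ n, (K q).1 n = (K m).1 (C m q n) := by
    intro m q h
    induction q with
    | zero =>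
      have : m = 0 := Nat.le_zero.1 h
      subst this; intro n; rfl
    | succ q ih =>
      by_cases h' : m ≤ q
      · intro n
        rw [hKs q n, ih h' (g q n), hC_succ_ge m q h' n]
      · have hm : m = q + 1 := by omega
        subst hm
        intro n
        rw [hC_id (q+1) (q+1) le_rfl]
        rfl
  -- D m q := C m q q is strictly monotone on [m, ∞)
  let D : ℕ → ℕ → ℕ := fun m q => C m q q
  have hD_lt_succ : ∀ m q, m ≤ q → D m q < D m (q + 1) := by
    intro m q h
    have h1 : D m (q + 1) = C m q (g q (q + 1)) := hC_succ_ge m q h (q + 1)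
    have h2 : q + 1 ≤ g q (q + 1) := (hg_mono q).le_apply
    calc D m q = C m q q := rfl
      _ < C m q (q + 1) := (hC_mono m q) (Nat.lt_succ_self q)
      _ ≤ C m q (g q (q + 1)) := (hC_mono m q).monotone h2
      _ = D m (q + 1) := h1.symm
  have hD_mono : ∀ m a b, m ≤ a → a < b → D m a < D m b := by
    intro m a b hma hab
    induction b with
    | zero => omega
    | succ b ih =>
      rcases Nat.lt_succ_iff_lt_or_eq.1 hab with h | h
      · exact (ih h).trans (hD_lt_succ m b (by omega))
      · subst h; exact hD_lt_succ m a hma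
  -- the diagonal
  let diag : ℕ → ℕ := fun n => (K n).1 n
  have hdiag_eq : ∀ m q, m ≤ q → diag q = (K m).1 (D m q) := by
    intro m q h
    exact hC_eq m q h q
  have hdiag_mono : StrictMono diag := by
    apply strictMono_nat_of_lt_succ
    intro n
    have h1 : diag (n + 1) = (K n).1 (g n (n + 1)) := hKs n (n + 1)
    calc diag n = (K n).1 n := rfl
      _ < (K n).1 (n + 1) := (K n).2 (Nat.lt_succ_self n)
      _ ≤ (K n).1 (g n (n + 1)) := (K n).2.monotone (hg_mono n).le_apply
      _ = diag (n + 1) := h1.symm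
  -- (1) rho along diag ≤ rho along K m
  have h1 : ∀ m, rho (fun n => x (diag n)) ≤ rho (fun n => x ((K m).1 n)) := by
    intro m
    have ht : rho (fun n => x (diag n)) = rho (fun n => x (diag (n + m))) :=
      (rho_tail (fun n => x (diag n)) m).symm
    have heq : (fun n => x (diag (n + m))) = fun n => x ((K m).1 (D m (n + m))) := by
      funext n
      rw [hdiag_eq m (n + m) (Nat.le_add_left m n)]
    have hψ : StrictMono (fun n => D m (n + m)) := by
      intro a b hab
      exact hD_mono m (a + m) (b + m) (Nat.le_add_left m a) (by omega)
    calc rho (fun n => x (diag n)) = rho (fun n => x (diag (n + m))) := ht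
      _ = rho (fun n => x ((K m).1 (D m (n + m)))) := by rw [heq]
      _ ≤ rho (fun n => x ((K m).1 n)) := rho_comp_le (fun n => x ((K m).1 n)) hψ
  -- (2) for any further subsequence j, rinf (K m) ≤ rho along diag ∘ j
  have h2 : ∀ (j : ℕ → ℕ), StrictMono j → ∀ m,
      rinf (K m) ≤ rho (fun n => x (diag (j n))) := by
    intro j hj m
    have ht : rho (fun n => x (diag (j n))) = rho (fun n => x (diag (j (n + m)))) :=
      (rho_tail (fun n => x (diag (j n))) m).symm
    have hge : ∀ n : ℕ, m ≤ j (n + m) := fun n =>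
      le_trans (Nat.le_add_left m n) hj.le_apply
    have heq : (fun n => x (diag (j (n + m)))) = fun n => x ((K m).1 (D m (j (n + m)))) := by
      funext n
      rw [hdiag_eq m (j (n + m)) (hge n)]
    have hψ : StrictMono (fun n => D m (j (n + m))) := by
      intro a b hab
      exact hD_mono m (j (a + m)) (j (b + m)) (hge a) (hj (by omega))
    have : rinf (K m) ≤ rho (fun n => x ((K m).1 (D m (j (n + m))))) :=
      iInf_le _ (⟨fun n => D m (j (n + m)), hψ⟩ : T)
    rw [ht, heq]
    exact this
  -- (3) rho along diag < rinf (K m) + 1/(m+1)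
  have h3 : ∀ m, rho (fun n => x (diag n)) < rinf (K m) + ((m : ℝ≥0∞) + 1)⁻¹ :=
    fun m => lt_of_le_of_lt (h1 (m + 1)) (hFlt m)
  refine ⟨diag, hdiag_mono, fun j hj => ?_⟩
  refine le_antisymm (rho_comp_le (fun n => x (diag n)) hj) ?_
  apply ENNReal.le_of_forall_pos_le_add
  intro ε hε hlt
  have hεne : (ε : ℝ≥0∞) ≠ 0 := by exact_mod_cast hε.ne'
  obtain ⟨m, hm⟩ := ENNReal.exists_inv_nat_lt hεne
  have hm' : ((m : ℝ≥0∞) + 1)⁻¹ ≤ (ε : ℝ≥0∞) := by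
    refine le_trans (ENNReal.inv_le_inv.2 ?_) hm.le
    exact le_add_right le_rfl
  calc rho (fun n => x (diag n)) ≤ rinf (K m) + ((m : ℝ≥0∞) + 1)⁻¹ := (h3 m).le
    _ ≤ rho (fun n => x (diag (j n))) + (ε : ℝ≥0∞) := add_le_add (h2 j hj m) hm'

end SDCaux

open SDCaux in
/-- in a Δ-complete metric space, every bounded sequence has a
strong-Δ convergent subsequence. -/
theorem stmt_7 (hE : DeltaComplete E) (x : ℕ → E) (hb : Bornology.IsBounded (Set.range x)) :
    ∃ (k : ℕ → ℕ) (p : E), StrictMono k ∧ StrongDeltaConv (fun n => x (k n)) p := by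
  classical
  obtain ⟨Cb, hCb⟩ := Metric.isBounded_iff.1 hb
  have hmem : ∀ n, x n ∈ Set.range x := fun n => Set.mem_range_self n
  have hfin : rho x ≠ ⊤ := by
    have h1 : Filter.limsup (fun n => edist (x n) (x 0)) Filter.atTop ≤ ENNReal.ofReal Cb := by
      refine Filter.limsup_le_of_le (by isBoundedDefault) ?_
      exact Filter.Eventually.of_forall fun n => by
        rw [edist_dist]
        exact ENNReal.ofReal_le_ofReal (hCb (hmem n) (hmem 0))
    have h2 : rho x ≤ ENNReal.ofReal Cb := le_trans (iInf_le _ (x 0)) h1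
    exact ne_top_of_le_ne_top ENNReal.ofReal_ne_top h2
  obtain ⟨k, hk, hstable⟩ := exists_stable x hfin
  set y : ℕ → E := fun n => x (k n) with hy
  have hyb : Bornology.IsBounded (Set.range y) := by
    apply hb.subset
    rintro _ ⟨n, rfl⟩
    exact hmem (k n)
  obtain ⟨c, hc⟩ := hE y hyb
  -- boundedness facts
  have hbd : ∀ z : E, Filter.IsBoundedUnder (· ≤ ·) Filter.atTop (fun n => dist (y n) z) := by
    intro z
    refine Filter.isBoundedUnder_of ⟨Cb + dist (x 0) z, fun n => ?_⟩
    calc dist (y n) z ≤ dist (y n) (x 0) + dist (x 0) z := dist_triangle _ _ _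
      _ ≤ Cb + dist (x 0) z := by
          exact add_le_add (hCb (hmem (k n)) (hmem 0)) le_rfl
  have hbd' : ∀ z : E, Filter.IsBoundedUnder (· ≥ ·) Filter.atTop (fun n => dist (y n) z) :=
    fun z => Filter.isBoundedUnder_of ⟨0, fun n => dist_nonneg⟩
  have hcob : ∀ z : E, Filter.IsCoboundedUnder (· ≤ ·) Filter.atTop (fun n => dist (y n) z) :=
    fun z => (hbd' z).isCoboundedUnder_flip
  have hcob' : ∀ z : E, Filter.IsCoboundedUnder (· ≥ ·) Filter.atTop (fun n => dist (y n) z) :=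
    fun z => (hbd z).isCoboundedUnder_flip
  have hofmono : Monotone ENNReal.ofReal := fun a b h => ENNReal.ofReal_le_ofReal h
  -- bridges between real and ennreal limsup/liminf
  have bridge : ∀ z : E, Filter.limsup (fun n => edist (y n) z) Filter.atTop =
      ENNReal.ofReal (Filter.limsup (fun n => dist (y n) z) Filter.atTop) := by
    intro z
    have h := hofmono.map_limsup_of_continuousAt (F := Filter.atTop) (fun n => dist (y n) z)
      ENNReal.continuous_ofReal.continuousAt (hbd z) (hcob z)
    rw [h]
    apply Filter.limsup_congr
    exact Filter.Eventually.of_forall fun n => by simp [Function.comp, edist_dist]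
  have bridge' : ∀ z : E, Filter.liminf (fun n => edist (y n) z) Filter.atTop =
      ENNReal.ofReal (Filter.liminf (fun n => dist (y n) z) Filter.atTop) := by
    intro z
    have h := hofmono.map_liminf_of_continuousAt (F := Filter.atTop) (fun n => dist (y n) z)
      ENNReal.continuous_ofReal.continuousAt (hcob' z) (hbd' z)
    rw [h]
    apply Filter.liminf_congr
    exact Filter.Eventually.of_forall fun n => by simp [Function.comp, edist_dist]
  -- asymptotic center in ennreal terms
  have hc' : ∀ z : E, Filter.limsup (fun n => edist (y n) c) Filter.atTop ≤
      Filter.limsup (fun n => edist (y n) z) Filter.atTop := by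
    intro z
    rw [bridge c, bridge z]
    exact ENNReal.ofReal_le_ofReal (hc z)
  have hlimsupc : Filter.limsup (fun n => edist (y n) c) Filter.atTop = rho y :=
    le_antisymm (le_iInf hc') (iInf_le _ c)
  have hstable' : ∀ j : ℕ → ℕ, StrictMono j → rho (fun n => y (j n)) = rho y := hstable
  -- key inequality
  have key : ∀ z : E, rho y ≤ Filter.liminf (fun n => edist (y n) z) Filter.atTop := by
    intro z
    by_contra hcon
    push_neg at hcon
    obtain ⟨a, ha1, ha2⟩ := exists_between hcon
    have hfreq : ∃ᶠ n in Filter.atTop, edist (y n) z < a :=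
      Filter.frequently_lt_of_liminf_lt (by isBoundedDefault) ha1
    obtain ⟨j, hj, hjlt⟩ := Filter.extraction_of_frequently_atTop hfreq
    have hle : rho (fun n => y (j n)) ≤ a := by
      refine le_trans (iInf_le _ z) ?_
      exact Filter.limsup_le_of_le (by isBoundedDefault)
        (Filter.Eventually.of_forall fun n => (hjlt n).le)
    rw [hstable' j hj] at hle
    exact absurd hle (not_le.2 ha2)
  have hliminfc : Filter.liminf (fun n => edist (y n) c) Filter.atTop = rho y :=
    le_antisymm (le_trans Filter.liminf_le_limsup hlimsupc.le) (key c)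
  have htends : Filter.Tendsto (fun n => edist (y n) c) Filter.atTop (nhds (rho y)) :=
    tendsto_of_liminf_eq_limsup hliminfc hlimsupc
  have hρfin : rho y ≠ ⊤ := ne_top_of_le_ne_top hfin (rho_comp_le x hk)
  refine ⟨k, c, hk, (rho y).toReal, ?_, ?_⟩
  · have h := (ENNReal.tendsto_toReal hρfin).comp htends
    have heq : (fun n => (edist (y n) c).toReal) = fun n => dist (y n) c :=
      funext fun n => (dist_edist _ _).symm
    rw [show (ENNReal.toReal ∘ fun n => edist (y n) c) = fun n => (edist (y n) c).toReal from rfl,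
      heq] at h
    exact h
  · intro z
    have h1 : rho y ≤ ENNReal.ofReal (Filter.liminf (fun n => dist (y n) z) Filter.atTop) := by
      rw [← bridge' z]; exact key z
    have h0 : 0 ≤ Filter.liminf (fun n => dist (y n) z) Filter.atTop :=
      Filter.le_liminf_of_le (hcob' z) (Filter.Eventually.of_forall fun n => dist_nonneg)
    have h2 := ENNReal.toReal_mono ENNReal.ofReal_ne_top h1
    rwa [ENNReal.toReal_ofReal h0] at h2
end
end

section
/- Every uniformly convex Banach space, with the metric induced by its norm, is a uniform SR (Staples rotund) metric space. -/
open Filter Metric ENNReal MeasureTheory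

noncomputable section

variable {E : Type*} [MetricSpace E]

/-- every uniformly convex Banach space is a uniform SR metric space. -/
theorem stmt_8 (F : Type*) [NormedAddCommGroup F] [NormedSpace ℝ F]
    [UniformConvexSpace F] [CompleteSpace F] : IsUniformSR F := by
  have key : ∀ r dbar : ℝ, ∃ δ : ℝ, 0 < r → 0 < dbar →
      0 < δ ∧ ∀ x y : F, dbar ≤ dist x y →
        chebyshevRadius (Metric.closedBall x (r + δ) ∩ Metric.closedBall y (r + δ)) ≤
          ENNReal.ofReal (r - δ) := by
    intro r dbar
    rcases le_or_gt r 0 with hr | hr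
    · exact ⟨1, fun h1 _ => absurd hr h1.not_ge⟩
    rcases le_or_gt dbar 0 with hd | hd
    · exact ⟨1, fun _ h2 => absurd hd h2.not_ge⟩
    have hε : 0 < dbar / (2 * r) := by positivity
    obtain ⟨δ₀, hδ₀, h⟩ := exists_forall_closed_ball_dist_add_le_two_sub F hε
    set δ₁ := min δ₀ 1 with hδ₁def
    have hδ₁ : 0 < δ₁ := lt_min hδ₀ one_pos
    have hδ₁1 : δ₁ ≤ 1 := min_le_right _ _
    have hδ₁0 : δ₁ ≤ δ₀ := min_le_left _ _
    refine ⟨r * δ₁ / 4, fun _ _ => ⟨by positivity, fun x y hxy => ?_⟩⟩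
    set δ := r * δ₁ / 4 with hδdef
    have hδpos : 0 < δ := by positivity
    have hδr : δ ≤ r := by nlinarith
    set s := r + δ with hsdef
    have hs : 0 < s := by positivity
    have hs2r : s ≤ 2 * r := by simp only [hsdef]; linarith
    set m := (2 : ℝ)⁻¹ • (x + y) with hm
    have main : ∀ w : F, w ∈ Metric.closedBall x (r + δ) ∩ Metric.closedBall y (r + δ) →
        dist m w ≤ r - δ := by
      rintro w ⟨hw1, hw2⟩
      rw [Metric.mem_closedBall, dist_eq_norm] at hw1 hw2
      set a := s⁻¹ • (w - x) with ha
      set b := s⁻¹ • (w - y) with hb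
      have hna : ‖a‖ ≤ 1 := by
        rw [ha, norm_smul, norm_inv, Real.norm_of_nonneg hs.le]
        rw [inv_mul_le_iff₀ hs, mul_one]
        exact hw1
      have hnb : ‖b‖ ≤ 1 := by
        rw [hb, norm_smul, norm_inv, Real.norm_of_nonneg hs.le]
        rw [inv_mul_le_iff₀ hs, mul_one]
        exact hw2
      have hab : dbar / (2 * r) ≤ ‖a - b‖ := by
        have : a - b = s⁻¹ • (y - x) := by
          rw [ha, hb, ← smul_sub]; congr 1; abel
        rw [this, norm_smul, norm_inv, Real.norm_of_nonneg hs.le]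
        have h1 : dbar ≤ ‖y - x‖ := by
          rw [← dist_eq_norm, dist_comm]; exact hxy
        rw [div_le_iff₀ (by positivity)]
        calc dbar ≤ ‖y - x‖ := h1
          _ = s⁻¹ * ‖y - x‖ * s := by field_simp
          _ ≤ s⁻¹ * ‖y - x‖ * (2 * r) := by
              have : (0:ℝ) ≤ s⁻¹ * ‖y - x‖ := by positivity
              nlinarith
      have hsum : ‖a + b‖ ≤ 2 - δ₀ := h hna hnb hab
      have habe : a + b = s⁻¹ • ((2:ℝ) • w - x - y) := by
        rw [ha, hb, ← smul_add]; congr 1; module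
      have hmw : m - w = (-(2:ℝ)⁻¹) • ((2:ℝ) • w - x - y) := by
        rw [hm]; module
      have hbig : ‖(2:ℝ) • w - x - y‖ = s * ‖a + b‖ := by
        rw [habe, norm_smul, norm_inv, Real.norm_of_nonneg hs.le]
        field_simp
      have hdmw : dist m w = 2⁻¹ * (s * ‖a + b‖) := by
        rw [dist_eq_norm, hmw, norm_smul, hbig]; norm_num
      have hnn : (0:ℝ) ≤ ‖a + b‖ := norm_nonneg _
      rw [hdmw]
      nlinarith [mul_le_mul_of_nonneg_left hsum hs.le]
    calc chebyshevRadius (Metric.closedBall x (r + δ) ∩ Metric.closedBall y (r + δ))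
        ≤ ⨆ w ∈ (Metric.closedBall x (r + δ) ∩ Metric.closedBall y (r + δ)), edist m w :=
          iInf_le _ m
      _ ≤ ENNReal.ofReal (r - δ) := by
          refine iSup₂_le fun w hw => ?_
          rw [edist_dist]
          exact ENNReal.ofReal_le_ofReal (main w hw)
  choose δ hδ using key
  exact ⟨δ, fun r dbar hr hd => (hδ r dbar hr hd).1,
    fun r dbar hr hd => (hδ r dbar hr hd).2⟩
end
end

section
/- Let (E,d) be a uniform SR (Staples rotund) metric space, let (x_n) be a bounded sequence in E and let x ∈ E be such that limsup_n ( d(x_n,x) − d(x_n,y) ) ≤ 0 for every y ∈ E. Then for each z ∈ E with z ≠ x there exist a constant c > 0 and n₀ ∈ ℕ such that d(x_n,x) ≤ d(x_n,z) − c for all n ≥ n₀; in particular, x is a polar limit of (x_n). -/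
open Filter Metric ENNReal MeasureTheory

noncomputable section

variable {E : Type*} [MetricSpace E]

/-- in a uniform SR space, if `x` is a bounded sequence and
`limsup (d(x_n,p) − d(x_n,y)) ≤ 0` for all `y`, then for every `z ≠ p` one has
`d(x_n,p) ≤ d(x_n,z) − c` eventually, for some `c > 0`; in particular `p` is a polar
limit of `x`. -/
theorem stmt_9 (hSR : IsUniformSR E) (x : ℕ → E) (p : E)
    (hb : Bornology.IsBounded (Set.range x))
    (h : ∀ y : E, Filter.limsup (fun n => dist (x n) p - dist (x n) y) Filter.atTop ≤ 0) :
    (∀ z : E, z ≠ p → ∃ c : ℝ, 0 < c ∧ ∃ n₀ : ℕ, ∀ n ≥ n₀,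
      dist (x n) p ≤ dist (x n) z - c) ∧ PolarLim x p := by
  
  -- eventual comparison from the limsup hypothesis
  have hev : ∀ y : E, ∀ ε : ℝ, 0 < ε → ∀ᶠ n in atTop, dist (x n) p < dist (x n) y + ε := by
    intro y ε hε
    have hbdd : IsBoundedUnder (· ≤ ·) atTop (fun n => dist (x n) p - dist (x n) y) := by
      refine isBoundedUnder_of ⟨dist y p, fun n => ?_⟩
      have := dist_triangle (x n) y p
      linarith [dist_comm (x n) p ▸ this]
    have : limsup (fun n => dist (x n) p - dist (x n) y) atTop < ε := lt_of_le_of_lt (h y) hε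
    filter_upwards [eventually_lt_of_limsup_lt this hbdd] with n hn
    linarith
  have main : ∀ z : E, z ≠ p → ∃ c : ℝ, 0 < c ∧ ∃ n₀ : ℕ, ∀ n ≥ n₀,
      dist (x n) p ≤ dist (x n) z - c := by
    intro z hz
    by_contra hcon
    push_neg at hcon
    -- extract a subsequence where the conclusion fails with c = 1/(n+1)
    have hfreq : ∀ n : ℕ, ∃ᶠ k in atTop, dist (x k) z - 1 / (n + 1) < dist (x k) p := by
      intro n
      rw [Filter.frequently_atTop]
      intro n₀
      obtain ⟨k, hk, hk2⟩ := hcon (1 / ((n : ℝ) + 1)) (by positivity) n₀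
      exact ⟨k, hk, by linarith⟩
    obtain ⟨φ, hφ, hφP⟩ := Filter.extraction_forall_of_frequently hfreq
    -- bounded: extract a convergent subsequence of dist (x (φ n)) p
    obtain ⟨R, hR⟩ := hb.subset_closedBall p
    have hmem : ∀ n, dist (x (φ n)) p ∈ Set.Icc (0 : ℝ) (max R 0) := by
      intro n
      refine ⟨dist_nonneg, ?_⟩
      have : x (φ n) ∈ Metric.closedBall p R := hR ⟨φ n, rfl⟩
      exact le_trans (Metric.mem_closedBall.mp this) (le_max_left _ _)
    obtain ⟨ρ, -, ψ, hψ, hρ⟩ :=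
      tendsto_subseq_of_bounded (Metric.isBounded_Icc (0:ℝ) (max R 0)) hmem
    set m : ℕ → ℕ := φ ∘ ψ with hm
    have hρ' : Tendsto (fun n => dist (x (m n)) p) atTop (nhds ρ) := hρ
    have hmono : StrictMono m := hφ.comp hψ
    -- the defining property along m
    have hPm : ∀ n, dist (x (m n)) z - 1 / ((n : ℝ) + 1) < dist (x (m n)) p := by
      intro n
      have := hφP (ψ n)
      have hle : 1 / ((ψ n : ℝ) + 1) ≤ 1 / ((n : ℝ) + 1) := by
        apply one_div_le_one_div_of_le (by positivity)
        have h3 : (n : ℝ) ≤ (ψ n : ℝ) := Nat.cast_le.mpr hψ.le_apply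
        linarith
      simp only [hm, Function.comp_apply]
      linarith
    set dbar := dist p z with hdbar
    have hdpos : 0 < dbar := dist_pos.mpr (Ne.symm hz)
    -- ρ ≥ dbar / 2 > 0
    have hρge : dbar / 2 ≤ ρ := by
      have hto : Tendsto (fun n : ℕ => (dbar - 1 / ((n : ℝ) + 1)) / 2) atTop (nhds (dbar / 2)) := by
        have h1 : Tendsto (fun n : ℕ => 1 / ((n : ℝ) + 1)) atTop (nhds 0) :=
          tendsto_one_div_add_atTop_nhds_zero_nat
        have := ((tendsto_const_nhds : Tendsto (fun _ : ℕ => dbar) atTop (nhds dbar)).sub h1).div_const 2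
        simpa using this
      refine le_of_tendsto_of_tendsto' hto hρ' fun n => ?_
      have h1 := hPm n
      have h2 : dbar ≤ dist (x (m n)) p + dist (x (m n)) z := by
        have := dist_triangle p (x (m n)) z
        simpa [dist_comm] using this
      linarith
    have hρpos : 0 < ρ := lt_of_lt_of_le (by linarith) hρge
    -- SR data
    obtain ⟨δf, hδpos, hδ⟩ := hSR
    set δ₀ := δf ρ dbar with hδ₀def
    have hδ₀pos : 0 < δ₀ := hδpos ρ dbar hρpos hdpos
    set δ := min δ₀ (ρ / 2) with hδdef
    have hδpos' : 0 < δ := lt_min hδ₀pos (by linarith)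
    have hδle : δ ≤ δ₀ := min_le_left _ _
    have hδleρ : δ ≤ ρ / 2 := min_le_right _ _
    -- Chebyshev radius bound for the smaller intersection
    set X : Set E := Metric.closedBall p (ρ + δ) ∩ Metric.closedBall z (ρ + δ) with hX
    have hcheb : chebyshevRadius X ≤ ENNReal.ofReal (ρ - δ) := by
      have h1 : chebyshevRadius X ≤ chebyshevRadius
          (Metric.closedBall p (ρ + δ₀) ∩ Metric.closedBall z (ρ + δ₀)) := by
        apply iInf_mono
        intro w
        apply iSup_le_iSup_of_subset
        exact Set.inter_subset_inter
          (Metric.closedBall_subset_closedBall (by linarith))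
          (Metric.closedBall_subset_closedBall (by linarith))
      have h2 := hδ ρ dbar hρpos hdpos p z le_rfl
      exact le_trans (le_trans h1 h2) (ENNReal.ofReal_le_ofReal (by linarith))
    -- extract a good center w
    have hlt : chebyshevRadius X < ENNReal.ofReal (ρ - δ / 2) := by
      refine lt_of_le_of_lt hcheb ?_
      rw [ENNReal.ofReal_lt_ofReal_iff (by linarith)]
      linarith
    rw [chebyshevRadius, iInf_lt_iff] at hlt
    obtain ⟨w, hw⟩ := hlt
    have hwX : ∀ v ∈ X, dist v w < ρ - δ / 2 := by
      intro v hv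
      have : edist w v < ENNReal.ofReal (ρ - δ / 2) :=
        lt_of_le_of_lt (le_iSup₂ (f := fun v (_ : v ∈ X) => edist w v) v hv) hw
      rw [edist_lt_ofReal] at this
      simpa [dist_comm] using this
    -- eventual facts
    have E1 : ∀ᶠ n in atTop, dist (x (m n)) p ≤ ρ + δ / 4 :=
      hρ'.eventually (eventually_le_nhds (by linarith))
    have E4 : ∀ᶠ n in atTop, ρ - δ / 8 ≤ dist (x (m n)) p :=
      hρ'.eventually (eventually_ge_nhds (by linarith))
    have E2 : ∀ᶠ n : ℕ in atTop, 1 / ((n : ℝ) + 1) ≤ δ / 4 :=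
      tendsto_one_div_add_atTop_nhds_zero_nat.eventually (eventually_le_nhds (by linarith))
    have E3 : ∀ᶠ n in atTop, dist (x (m n)) p < dist (x (m n)) w + δ / 4 :=
      hmono.tendsto_atTop.eventually (hev w (δ / 4) (by linarith))
    obtain ⟨n, h1, h4, h2, h3⟩ := (E1.and (E4.and (E2.and E3))).exists
    -- x (m n) ∈ X
    have hxz : dist (x (m n)) z ≤ ρ + δ := by
      have := hPm n
      linarith
    have hmemX : x (m n) ∈ X :=
      ⟨Metric.mem_closedBall.mpr (by linarith), Metric.mem_closedBall.mpr hxz⟩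
    have := hwX _ hmemX
    linarith
  refine ⟨main, fun y hy => ?_⟩
  obtain ⟨c, hc, n₀, hn₀⟩ := main y hy
  exact ⟨n₀, fun n hn => lt_of_le_of_lt (hn₀ n hn) (by linarith)⟩
end
end

section
/- Let (E,d) be a uniform SR (Staples rotund) metric space, let (x_n) be a bounded sequence in E and let x ∈ E. Then (x_n) Δ-converges to x if and only if x is a polar limit of (x_n). -/
open Filter Metric ENNReal MeasureTheory

noncomputable section

variable {E : Type*} [MetricSpace E]

/-- in a uniform SR space, a bounded sequence Δ-converges to `p`
iff `p` is its polar limit. -/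
theorem stmt_10 (hSR : IsUniformSR E) (x : ℕ → E) (p : E)
    (hb : Bornology.IsBounded (Set.range x)) :
    DeltaConv x p ↔ PolarLim x p := by
  constructor
  · intro hΔ
    by_contra hP
    unfold PolarLim at hP
    push_neg at hP
    obtain ⟨y, hyp, hfreq⟩ := hP
    have hfreq' : ∃ᶠ n in atTop, dist (x n) y ≤ dist (x n) p := by
      rw [Filter.frequently_atTop]
      intro M; obtain ⟨n, hn, h⟩ := hfreq M; exact ⟨n, hn, h⟩
    obtain ⟨k, hk, hky⟩ := Filter.extraction_of_frequently_atTop hfreq'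
    set L := Filter.limsup (fun n => edist (x (k n)) p) Filter.atTop with hLdef
    -- L is finite
    obtain ⟨C, hC⟩ := hb.subset_closedBall p
    have hbd : ∀ n, edist (x (k n)) p ≤ ENNReal.ofReal C := by
      intro n
      rw [edist_dist]
      exact ENNReal.ofReal_le_ofReal (hC ⟨k n, rfl⟩)
    have hLtop : L < ⊤ :=
      lt_of_le_of_lt (Filter.limsup_le_of_le (h := Filter.Eventually.of_forall hbd))
        ENNReal.ofReal_lt_top
    -- pointwise bound on the subsequence
    have hptw : ∀ n, edist (x (k n)) y ≤ edist (x (k n)) p := fun n => by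
      rw [edist_dist, edist_dist]; exact ENNReal.ofReal_le_ofReal (hky n)
    have hyL : Filter.limsup (fun n => edist (x (k n)) y) Filter.atTop ≤ L :=
      Filter.limsup_le_limsup (Filter.Eventually.of_forall hptw)
    -- L ≠ 0
    have hL0 : L ≠ 0 := by
      intro h0
      have hεpos : (0 : ℝ≥0∞) < edist p y / 2 := by
        refine ENNReal.div_pos ?_ (by norm_num)
        exact (edist_pos.mpr (Ne.symm hyp)).ne'
      have h1 : ∀ᶠ n in atTop, edist (x (k n)) p < edist p y / 2 :=
        Filter.eventually_lt_of_limsup_lt (by rw [← hLdef, h0]; exact hεpos)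
      have h2 : ∀ᶠ n in atTop, edist (x (k n)) y < edist p y / 2 :=
        Filter.eventually_lt_of_limsup_lt (lt_of_le_of_lt (by rw [h0] at hyL; exact hyL) hεpos)
      obtain ⟨n, hn1, hn2⟩ := (h1.and h2).exists
      have : edist p y < edist p y := by
        calc edist p y ≤ edist p (x (k n)) + edist (x (k n)) y := edist_triangle _ _ _
          _ = edist (x (k n)) p + edist (x (k n)) y := by rw [edist_comm]
          _ < edist p y / 2 + edist p y / 2 := ENNReal.add_lt_add hn1 hn2
          _ = edist p y := ENNReal.add_halves _
      exact lt_irrefl _ this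
    set r := L.toReal with hrdef
    have hLr : ENNReal.ofReal r = L := ENNReal.ofReal_toReal hLtop.ne
    have hr : 0 < r := ENNReal.toReal_pos hL0 hLtop.ne
    obtain ⟨δf, hδpos, hSRprop⟩ := hSR
    have hdbar : (0 : ℝ) < dist p y := dist_pos.mpr (Ne.symm hyp)
    set δ := δf r (dist p y) with hδdef
    have hδ : 0 < δ := hδpos r (dist p y) hr hdbar
    have hcheb := hSRprop r (dist p y) hr hdbar p y le_rfl
    -- eventual membership
    have hev_p : ∀ᶠ n in atTop, edist (x (k n)) p < ENNReal.ofReal (r + δ) := by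
      have : L < ENNReal.ofReal (r + δ) := by
        rw [ENNReal.ofReal_add hr.le hδ.le, hLr]
        exact ENNReal.lt_add_right hLtop.ne (ENNReal.ofReal_pos.mpr hδ).ne'
      exact Filter.eventually_lt_of_limsup_lt this
    have hev_mem : ∀ᶠ n in atTop,
        x (k n) ∈ Metric.closedBall p (r + δ) ∩ Metric.closedBall y (r + δ) := by
      filter_upwards [hev_p] with n hn
      have hrd : (0:ℝ) ≤ r + δ := by linarith
      constructor
      · rw [Metric.mem_closedBall, ← ENNReal.ofReal_le_ofReal_iff hrd, ← edist_dist]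
        exact hn.le
      · rw [Metric.mem_closedBall, ← ENNReal.ofReal_le_ofReal_iff hrd, ← edist_dist]
        exact le_trans (hptw n) hn.le
    have hchlt : chebyshevRadius
        (Metric.closedBall p (r + δ) ∩ Metric.closedBall y (r + δ)) < L := by
      refine lt_of_le_of_lt hcheb ?_
      rw [← hLr]
      exact (ENNReal.ofReal_lt_ofReal_iff hr).mpr (by linarith)
    rw [chebyshevRadius, iInf_lt_iff] at hchlt
    obtain ⟨z, hz⟩ := hchlt
    have hlz : Filter.limsup (fun n => edist (x (k n)) z) Filter.atTop < L := by
      refine lt_of_le_of_lt (Filter.limsup_le_of_le (h := ?_)) hz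
      filter_upwards [hev_mem] with n hn
      rw [edist_comm]
      exact le_iSup₂ (f := fun w (_ : w ∈ _) => edist z w) (x (k n)) hn
    exact absurd (hΔ k hk z) (not_le.mpr hlz)
  · intro hP k hk y
    by_cases hyp : y = p
    · subst hyp; exact le_rfl
    obtain ⟨M, hM⟩ := hP y hyp
    refine Filter.limsup_le_limsup (Filter.eventually_atTop.mpr ⟨M, fun n hn => ?_⟩)
    have h : dist (x (k n)) p < dist (x (k n)) y := hM (k n) (le_trans hn hk.le_apply)
    simp only [edist_dist]
    exact ENNReal.ofReal_le_ofReal h.le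
end
end

section
/- Let (E,d) be a uniform SR (Staples rotund) metric space, let (x_n) be a bounded sequence in E, and let I(y) = limsup_n d(x_n,y) for y ∈ E. Then for every d̄ > 0 there exists ε > 0 such that whenever x, y ∈ E satisfy max(I(x), I(y)) < inf_{z∈E} I(z) + ε, one has d(x,y) < d̄. -/
open Filter Metric ENNReal MeasureTheory

noncomputable section

variable {E : Type*} [MetricSpace E]

/-- in a uniform SR space, for `I(y) = limsup d(x_n,y)` and any `d̄ > 0`
there is `ε > 0` such that `max(I(x),I(y)) < inf I + ε` implies `d(x,y) < d̄`. -/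
theorem stmt_11 (hSR : IsUniformSR E) (x : ℕ → E)
    (hb : Bornology.IsBounded (Set.range x)) :
    ∀ dbar : ℝ, 0 < dbar → ∃ ε : ℝ, 0 < ε ∧ ∀ a b : E,
      max (Filter.limsup (fun n => dist (x n) a) Filter.atTop)
          (Filter.limsup (fun n => dist (x n) b) Filter.atTop) <
        (⨅ z : E, Filter.limsup (fun n => dist (x n) z) Filter.atTop) + ε →
      dist a b < dbar := by
  intro dbar hdbar
  set I : E → ℝ := fun z => Filter.limsup (fun n => dist (x n) z) Filter.atTop with hI
  have hbdd : ∀ y : E, IsBoundedUnder (· ≤ ·) atTop (fun n => dist (x n) y) := by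
    intro y
    obtain ⟨r, hr⟩ := hb.subset_closedBall y
    exact Filter.isBoundedUnder_of ⟨r, fun n =>
      mem_closedBall.mp (hr (Set.mem_range_self n))⟩
  haveI : Nonempty E := ⟨x 0⟩
  have hnonneg : ∀ z : E, 0 ≤ I z := fun z =>
    Filter.le_limsup_of_frequently_le
      (Filter.Frequently.of_forall fun n => dist_nonneg) (hbdd z)
  set m : ℝ := ⨅ z : E, I z with hm
  have hmle : ∀ z : E, m ≤ I z := fun z =>
    ciInf_le ⟨0, fun t ⟨z, hz⟩ => hz ▸ hnonneg z⟩ z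
  have hm0 : 0 ≤ m := le_ciInf hnonneg
  -- from `I z < c` deduce eventually `dist (x n) z < c`
  have hev : ∀ (z : E) (c : ℝ), I z < c → ∀ᶠ n in atTop, dist (x n) z < c := by
    intro z c hc
    exact Filter.eventually_lt_of_limsup_lt hc (hbdd z)
  -- from eventually `dist (x n) z ≤ c` deduce `I z ≤ c`
  have hle : ∀ (z : E) (c : ℝ), (∀ᶠ n in atTop, dist (x n) z ≤ c) → I z ≤ c := by
    intro z c hc
    refine Filter.limsup_le_of_le ?_ hc
    exact (Filter.isBoundedUnder_of (f := atTop) (u := fun n => dist (x n) z)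
      ⟨0, fun n => dist_nonneg⟩ : IsBoundedUnder (· ≥ ·) atTop _).isCoboundedUnder_le
  rcases lt_or_ge m (dbar / 2) with hcase | hcase
  · -- small infimum case: triangle inequality
    refine ⟨dbar / 2 - m, by linarith, fun a b hab => ?_⟩
    have ha : I a < dbar / 2 := by
      have h := (le_max_left (I a) (I b)).trans_lt hab
      linarith
    have hb' : I b < dbar / 2 := by
      have h := (le_max_right (I a) (I b)).trans_lt hab
      linarith
    have h1 := hev a _ ha
    have h2 := hev b _ hb'
    obtain ⟨n, hn1, hn2⟩ := ((h1.and h2).exists)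
    calc dist a b ≤ dist a (x n) + dist (x n) b := dist_triangle _ _ _
      _ < dbar / 2 + dbar / 2 := by rw [dist_comm a (x n)]; linarith
      _ = dbar := by ring
  · -- uniform SR case
    obtain ⟨δ, hδpos, hδ⟩ := hSR
    have hmpos : 0 < m := lt_of_lt_of_le (by linarith) hcase
    set d := δ m dbar with hd
    have hdpos : 0 < d := hδpos m dbar hmpos hdbar
    refine ⟨d, hdpos, fun a b hab => ?_⟩
    by_contra hcon
    push_neg at hcon
    have ha : I a < m + d := (le_max_left _ _).trans_lt hab
    have hb' : I b < m + d := (le_max_right _ _).trans_lt hab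
    have hcheb := hδ m dbar hmpos hdbar a b hcon
    -- pick η
    set η : ℝ := min (d / 2) (m / 2) with hη
    have hηpos : 0 < η := lt_min (by linarith) (by linarith)
    have hmη : 0 < m - η := by
      have : η ≤ m / 2 := min_le_right _ _
      linarith
    have hlt : chebyshevRadius
        (Metric.closedBall a (m + d) ∩ Metric.closedBall b (m + d)) <
        ENNReal.ofReal (m - η) := by
      refine lt_of_le_of_lt hcheb ?_
      rw [ENNReal.ofReal_lt_ofReal_iff hmη]
      have : η ≤ d / 2 := min_le_left _ _
      linarith
    rw [chebyshevRadius, iInf_lt_iff] at hlt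
    obtain ⟨z, hz⟩ := hlt
    have hzw : ∀ w ∈ Metric.closedBall a (m + d) ∩ Metric.closedBall b (m + d),
        dist (w : E) z < m - η := by
      intro w hw
      have : edist z w < ENNReal.ofReal (m - η) :=
        lt_of_le_of_lt (le_iSup₂ (f := fun w _ => edist z w) w hw) hz
      rw [edist_lt_ofReal] at this
      rw [dist_comm]
      exact this
    have hmem : ∀ᶠ n in atTop,
        x n ∈ Metric.closedBall a (m + d) ∩ Metric.closedBall b (m + d) := by
      filter_upwards [hev a _ ha, hev b _ hb'] with n h1 h2
      exact ⟨mem_closedBall.mpr h1.le, mem_closedBall.mpr h2.le⟩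
    have hIz : I z ≤ m - η := by
      refine hle z _ ?_
      filter_upwards [hmem] with n hn
      exact (hzw (x n) hn).le
    have : m ≤ m - η := le_trans (hmle z) hIz
    linarith
end
end

section
/- Let (E,d) be a uniform SR (Staples rotund) metric space, let (x_n) be a bounded sequence in E, and let I(y) = limsup_n d(x_n,y) for y ∈ E. Then the functional I admits at most one minimum point; that is, if x and y both satisfy I(x) = I(y) = inf_{z∈E} I(z), then x = y. -/
open Filter Metric ENNReal MeasureTheory

noncomputable section

variable {E : Type*} [MetricSpace E]

/-- in a uniform SR space, the functional `I(y) = limsup d(x_n,y)`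
associated with a bounded sequence has at most one minimum point. -/
theorem stmt_12 (hSR : IsUniformSR E) (x : ℕ → E)
    (hb : Bornology.IsBounded (Set.range x)) (a b : E)
    (ha : Filter.limsup (fun n => dist (x n) a) Filter.atTop =
      ⨅ z : E, Filter.limsup (fun n => dist (x n) z) Filter.atTop)
    (hbm : Filter.limsup (fun n => dist (x n) b) Filter.atTop =
      ⨅ z : E, Filter.limsup (fun n => dist (x n) z) Filter.atTop) :
    a = b := by
  obtain ⟨R, hR⟩ := hb.subset_closedBall a
  have hRx : ∀ n, dist (x n) a ≤ R := fun n => hR (Set.mem_range_self n)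
  have hBdd : ∀ z : E, IsBoundedUnder (· ≤ ·) atTop (fun n => dist (x n) z) := by
    intro z
    refine ⟨R + dist a z, eventually_map.mpr (Eventually.of_forall fun n => ?_)⟩
    calc dist (x n) z ≤ dist (x n) a + dist a z := dist_triangle _ _ _
      _ ≤ R + dist a z := by linarith [hRx n]
  have hBddGe : ∀ z : E, IsBoundedUnder (· ≥ ·) atTop (fun n => dist (x n) z) := fun z =>
    ⟨0, eventually_map.mpr (Eventually.of_forall fun n => dist_nonneg)⟩
  have hCob : ∀ z : E, IsCoboundedUnder (· ≤ ·) atTop (fun n => dist (x n) z) := fun z =>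
    (hBddGe z).isCoboundedUnder_le
  have hnonneg : ∀ z : E, 0 ≤ Filter.limsup (fun n => dist (x n) z) Filter.atTop := fun z =>
    le_limsup_of_frequently_le (Frequently.of_forall fun n => dist_nonneg) (hBdd z)
  set r : ℝ := ⨅ z : E, Filter.limsup (fun n => dist (x n) z) Filter.atTop with hr
  have hBddBelow : BddBelow (Set.range fun z : E =>
      Filter.limsup (fun n => dist (x n) z) Filter.atTop) := by
    refine ⟨0, ?_⟩; rintro _ ⟨z, rfl⟩; exact hnonneg z
  haveI : Nonempty E := ⟨a⟩
  have hr0 : 0 ≤ r := le_ciInf fun z => hnonneg z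
  rcases eq_or_lt_of_le hr0 with hr0' | hrpos
  · -- r = 0 : both sequences converge to a and b
    have tend : ∀ z : E, Filter.limsup (fun n => dist (x n) z) Filter.atTop = r →
        Tendsto (fun n => dist (x n) z) atTop (nhds 0) := by
      intro z hz
      have hls : Filter.limsup (fun n => dist (x n) z) Filter.atTop = 0 := by
        rw [hz, ← hr0']
      have hlige : 0 ≤ Filter.liminf (fun n => dist (x n) z) Filter.atTop :=
        le_liminf_of_le (hBdd z).isCoboundedUnder_ge
          (Eventually.of_forall fun n => dist_nonneg)
      have hlile : Filter.liminf (fun n => dist (x n) z) Filter.atTop ≤ 0 := by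
        rw [← hls]; exact liminf_le_limsup (hBdd z) (hBddGe z)
      have := tendsto_of_liminf_eq_limsup (le_antisymm hlile hlige) hls (hBdd z) (hBddGe z)
      exact this
    have ta := tend a ha
    have tb := tend b hbm
    have hsum : Tendsto (fun n => dist (x n) a + dist (x n) b) atTop (nhds 0) := by
      simpa using ta.add tb
    have : dist a b ≤ 0 := by
      refine ge_of_tendsto' hsum fun n => ?_
      calc dist a b ≤ dist a (x n) + dist (x n) b := dist_triangle _ _ _
        _ = dist (x n) a + dist (x n) b := by rw [dist_comm a (x n)]
    exact dist_le_zero.mp this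
  · -- r > 0
    by_contra hab
    have hdbar : 0 < dist a b := dist_pos.mpr hab
    obtain ⟨δ, hδpos, hδ⟩ := hSR
    set d₀ : ℝ := δ r (dist a b) with hd0
    have hd0pos : 0 < d₀ := hδpos r (dist a b) hrpos hdbar
    have hcheb := hδ r (dist a b) hrpos hdbar a b le_rfl
    have hchebr : chebyshevRadius
        (Metric.closedBall a (r + d₀) ∩ Metric.closedBall b (r + d₀)) < ENNReal.ofReal r :=
      lt_of_le_of_lt hcheb (by
        exact (ENNReal.ofReal_lt_ofReal_iff hrpos).mpr (by linarith))
    rw [chebyshevRadius, iInf_lt_iff] at hchebr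
    obtain ⟨z, hz⟩ := hchebr
    set S : ℝ≥0∞ := ⨆ w ∈ (Metric.closedBall a (r + d₀) ∩ Metric.closedBall b (r + d₀)),
      edist z w with hS
    have hSlt : S < ENNReal.ofReal r := hz
    have hSr : S.toReal < r := ENNReal.toReal_lt_of_lt_ofReal hSlt
    have hmema : ∀ᶠ n in atTop, dist (x n) a < r + d₀ :=
      eventually_lt_of_limsup_lt (by rw [ha]; linarith) (hBdd a)
    have hmemb : ∀ᶠ n in atTop, dist (x n) b < r + d₀ :=
      eventually_lt_of_limsup_lt (by rw [hbm]; linarith) (hBdd b)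
    have hev : ∀ᶠ n in atTop, dist (x n) z ≤ S.toReal := by
      filter_upwards [hmema, hmemb] with n h1 h2
      have hmem : x n ∈ Metric.closedBall a (r + d₀) ∩ Metric.closedBall b (r + d₀) :=
        ⟨Metric.mem_closedBall.mpr h1.le, Metric.mem_closedBall.mpr h2.le⟩
      have hle : edist z (x n) ≤ S := le_biSup _ hmem
      have : dist z (x n) ≤ S.toReal := by
        rw [dist_edist]
        exact (ENNReal.toReal_le_toReal (edist_ne_top _ _) hSlt.ne_top).mpr hle
      rwa [dist_comm] at this
    have hlimz : Filter.limsup (fun n => dist (x n) z) Filter.atTop ≤ S.toReal :=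
      limsup_le_of_le (hCob z) hev
    have hrle : r ≤ Filter.limsup (fun n => dist (x n) z) Filter.atTop :=
      ciInf_le hBddBelow z
    linarith
end
end

section
/- Let (E,d) be a uniform SR (Staples rotund) metric space, let (x_n) be a bounded sequence in E, and let I(y) = limsup_n d(x_n,y) for y ∈ E. Then every minimizing sequence of the functional I (i.e. every sequence (y_k) in E with I(y_k) → inf_{z∈E} I(z)) is a Cauchy sequence. -/
open Filter Metric ENNReal MeasureTheory

noncomputable section

variable {E : Type*} [MetricSpace E]

/-- in a uniform SR space, every minimizing sequence of
`I(y) = limsup d(x_n,y)` is a Cauchy sequence. -/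
theorem stmt_13 (hSR : IsUniformSR E) (x : ℕ → E)
    (hb : Bornology.IsBounded (Set.range x)) (y : ℕ → E)
    (hy : Filter.Tendsto (fun k => Filter.limsup (fun n => dist (x n) (y k)) Filter.atTop)
      Filter.atTop
      (nhds (⨅ z : E, Filter.limsup (fun n => dist (x n) z) Filter.atTop))) :
    CauchySeq y := by
  classical
  set ρ := ⨅ z : E, Filter.limsup (fun n => dist (x n) z) Filter.atTop with hρdef
  obtain ⟨δ, hδpos, hδ⟩ := hSR
  -- boundedness facts
  obtain ⟨C, hC⟩ := Metric.isBounded_iff.mp hb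
  have hCx : ∀ n, dist (x n) (x 0) ≤ C := fun n =>
    hC (Set.mem_range_self n) (Set.mem_range_self 0)
  have hbdd : ∀ z : E, IsBoundedUnder (· ≤ ·) atTop (fun n => dist (x n) z) := fun z =>
    Filter.isBoundedUnder_of ⟨C + dist (x 0) z, fun n =>
      (dist_triangle (x n) (x 0) z).trans (by linarith [hCx n])⟩
  have hnn : ∀ z : E, 0 ≤ Filter.limsup (fun n => dist (x n) z) Filter.atTop := fun z =>
    le_limsup_of_frequently_le (Filter.Frequently.of_forall fun n => dist_nonneg) (hbdd z)
  have hcob : ∀ z : E, IsCoboundedUnder (· ≤ ·) atTop (fun n => dist (x n) z) := fun z =>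
    Filter.IsBoundedUnder.isCoboundedUnder_le
      (Filter.isBoundedUnder_of ⟨0, fun n => dist_nonneg⟩)
  have _inst : Nonempty E := ⟨y 0⟩
  have hρ0 : 0 ≤ ρ := le_ciInf hnn
  have hρle : ∀ z : E, ρ ≤ Filter.limsup (fun n => dist (x n) z) Filter.atTop := fun z =>
    ciInf_le ⟨0, Set.forall_mem_range.mpr hnn⟩ z
  rw [Metric.cauchySeq_iff]
  intro ε hε
  rcases eq_or_lt_of_le hρ0 with hρ | hρ
  · -- case ρ = 0
    have hev : ∀ᶠ k in atTop,
        Filter.limsup (fun n => dist (x n) (y k)) Filter.atTop < ε / 3 :=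
      hy.eventually_lt_const (by rw [← hρ]; linarith)
    obtain ⟨N, hN⟩ := Filter.eventually_atTop.mp hev
    refine ⟨N, fun k hk l hl => ?_⟩
    have h1 := eventually_lt_of_limsup_lt (hN k hk) (hbdd (y k))
    have h2 := eventually_lt_of_limsup_lt (hN l hl) (hbdd (y l))
    obtain ⟨n, hn1, hn2⟩ := (h1.and h2).exists
    calc dist (y k) (y l) ≤ dist (y k) (x n) + dist (x n) (y l) := dist_triangle _ _ _
      _ < ε / 3 + ε / 3 := by rw [dist_comm]; exact add_lt_add hn1 hn2
      _ < ε := by linarith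
  · -- case ρ > 0
    set δ0 := δ ρ ε with hδ0def
    have hδ0 : 0 < δ0 := hδpos ρ ε hρ hε
    have hev : ∀ᶠ k in atTop,
        Filter.limsup (fun n => dist (x n) (y k)) Filter.atTop < ρ + δ0 :=
      hy.eventually_lt_const (by linarith)
    obtain ⟨N, hN⟩ := Filter.eventually_atTop.mp hev
    refine ⟨N, fun k hk l hl => ?_⟩
    by_contra hcon
    push_neg at hcon
    have hdist : ε ≤ dist (y k) (y l) := hcon
    have hcheb := hδ ρ ε hρ hε (y k) (y l) hdist
    set b := max (ρ - δ0 / 2) (ρ / 2) with hbdef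
    have hbpos : 0 < b := lt_max_of_lt_right (by linarith)
    have hbρ : b < ρ := max_lt (by linarith) (by linarith)
    have hlt : chebyshevRadius
        (Metric.closedBall (y k) (ρ + δ0) ∩ Metric.closedBall (y l) (ρ + δ0)) <
        ENNReal.ofReal b :=
      lt_of_le_of_lt hcheb
        ((ENNReal.ofReal_lt_ofReal_iff hbpos).mpr
          (lt_of_lt_of_le (by linarith) (le_max_left _ _)))
    rw [chebyshevRadius, iInf_lt_iff] at hlt
    obtain ⟨z, hz⟩ := hlt
    -- eventually x n is in both balls
    have hmem : ∀ᶠ n in atTop,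
        x n ∈ Metric.closedBall (y k) (ρ + δ0) ∩ Metric.closedBall (y l) (ρ + δ0) := by
      have h1 := eventually_lt_of_limsup_lt (hN k hk) (hbdd (y k))
      have h2 := eventually_lt_of_limsup_lt (hN l hl) (hbdd (y l))
      filter_upwards [h1, h2] with n hn1 hn2
      exact ⟨Metric.mem_closedBall.mpr hn1.le, Metric.mem_closedBall.mpr hn2.le⟩
    have hle : ∀ᶠ n in atTop, dist (x n) z ≤ b := by
      filter_upwards [hmem] with n hn
      have : edist z (x n) < ENNReal.ofReal b :=
        lt_of_le_of_lt (le_iSup₂_of_le (x n) hn le_rfl) hz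
      rw [edist_comm] at this
      exact (edist_lt_ofReal.mp this).le
    have : ρ ≤ b :=
      (hρle z).trans (Filter.limsup_le_of_le (hcob z) hle)
    linarith
end
end

section
/- Let (E,d) be a complete uniform SR (Staples rotund) metric space and let (x_n) be a bounded sequence in E. Then (x_n) admits a unique asymptotic center, i.e. the functional I(y) = limsup_n d(x_n,y) has exactly one minimum point x̄; moreover, every minimizing sequence of I converges in the metric to x̄. -/
open Filter Metric ENNReal MeasureTheory

noncomputable section

variable {E : Type*} [MetricSpace E]

/-- in a complete uniform SR space, every bounded sequence has a unique
asymptotic center, and every minimizing sequence of `I` converges to it. -/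
theorem stmt_14 [CompleteSpace E] (hSR : IsUniformSR E) (x : ℕ → E)
    (hb : Bornology.IsBounded (Set.range x)) :
    ∃ c : E, AsympCenter x c ∧ (∀ c' : E, AsympCenter x c' → c' = c) ∧
      ∀ y : ℕ → E,
        Filter.Tendsto (fun k => Filter.limsup (fun n => dist (x n) (y k)) Filter.atTop)
          Filter.atTop
          (nhds (⨅ z : E, Filter.limsup (fun n => dist (x n) z) Filter.atTop)) →
        Filter.Tendsto y Filter.atTop (nhds c) := by
  have : Nonempty E := ⟨x 0⟩
  obtain ⟨δ, hδpos, hδ⟩ := hSR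
  set I : E → ℝ := fun y => Filter.limsup (fun n => dist (x n) y) Filter.atTop with hIdef
  have hbd : ∀ y : E, ∃ C : ℝ, ∀ n, dist (x n) y ≤ C := by
    intro y
    obtain ⟨r, hr⟩ := hb.subset_closedBall y
    exact ⟨r, fun n => hr (Set.mem_range_self n)⟩
  have hbu : ∀ y : E, Filter.IsBoundedUnder (· ≤ ·) Filter.atTop (fun n => dist (x n) y) :=
    fun y => (hbd y).elim fun C hC => Filter.isBoundedUnder_of ⟨C, hC⟩
  have hbl : ∀ y : E, Filter.IsBoundedUnder (· ≥ ·) Filter.atTop (fun n => dist (x n) y) :=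
    fun y => Filter.isBoundedUnder_of ⟨0, fun n => dist_nonneg⟩
  have hcob : ∀ y : E, Filter.IsCoboundedUnder (· ≤ ·) Filter.atTop (fun n => dist (x n) y) :=
    fun y => (hbl y).isCoboundedUnder_le
  have hInonneg : ∀ y : E, 0 ≤ I y := by
    intro y
    refine Filter.le_limsup_of_le (hbu y) fun b hb' => ?_
    obtain ⟨n, hn⟩ := hb'.exists
    exact le_trans dist_nonneg hn
  have hLip : ∀ y z : E, I y ≤ I z + dist z y := by
    intro y z
    have h1 : I y ≤ Filter.limsup (fun n => dist (x n) z + dist z y) Filter.atTop := by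
      refine Filter.limsup_le_limsup (Filter.Eventually.of_forall fun n => dist_triangle _ _ _)
        (hcob y) ?_
      obtain ⟨C, hC⟩ := hbd z
      exact Filter.isBoundedUnder_of ⟨C + dist z y, fun n => add_le_add_left (hC n) _⟩
    rwa [limsup_add_const Filter.atTop _ (dist z y) (hbu z) (hcob z)] at h1
  set L : ℝ := ⨅ z : E, I z with hLdef
  have hbddI : BddBelow (Set.range I) := ⟨0, fun v ⟨y, hy⟩ => hy ▸ hInonneg y⟩
  have hLle : ∀ y : E, L ≤ I y := fun y => ciInf_le hbddI y
  have hL0 : 0 ≤ L := le_ciInf hInonneg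
  -- key uniform contraction property
  have key : ∀ dbar : ℝ, 0 < dbar → ∃ ε : ℝ, 0 < ε ∧
      ∀ y z : E, I y < L + ε → I z < L + ε → dist y z < dbar := by
    intro dbar hdbar
    rcases eq_or_lt_of_le hL0 with hL | hL
    · -- L = 0
      refine ⟨dbar / 2, by linarith, fun y z hy hz => ?_⟩
      have hsum : dist y z ≤ I y + I z := by
        rw [← sub_le_iff_le_add']
        refine Filter.le_limsup_of_le (hbu z) fun b hb1 => ?_
        rw [sub_le_iff_le_add, ← sub_le_iff_le_add']
        refine Filter.le_limsup_of_le (hbu y) fun b' hb2 => ?_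
        obtain ⟨n, h1, h2⟩ := (hb1.and hb2).exists
        have := dist_triangle y (x n) z
        rw [dist_comm y (x n)] at this
        linarith
      linarith
    · -- L > 0
      set d0 : ℝ := min (δ L dbar) (L / 2) with hd0
      have hd0pos : 0 < d0 := lt_min (hδpos L dbar hL hdbar) (by linarith)
      have hd0L : d0 ≤ L / 2 := min_le_right _ _
      refine ⟨d0, hd0pos, fun y z hy hz => ?_⟩
      by_contra hcon
      push_neg at hcon
      have hcheb := hδ L dbar hL hdbar y z hcon
      have hev : ∀ᶠ n in Filter.atTop,
          x n ∈ Metric.closedBall y (L + δ L dbar) ∩ Metric.closedBall z (L + δ L dbar) := by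
        have h1 : I y < L + δ L dbar := lt_of_lt_of_le hy (by
          have := min_le_left (δ L dbar) (L / 2); linarith)
        have h2 : I z < L + δ L dbar := lt_of_lt_of_le hz (by
          have := min_le_left (δ L dbar) (L / 2); linarith)
        filter_upwards [Filter.eventually_lt_of_limsup_lt h1 (hbu y),
          Filter.eventually_lt_of_limsup_lt h2 (hbu z)] with n hn1 hn2
        exact ⟨Metric.mem_closedBall.mpr hn1.le, Metric.mem_closedBall.mpr hn2.le⟩
      have hlt : chebyshevRadius
          (Metric.closedBall y (L + δ L dbar) ∩ Metric.closedBall z (L + δ L dbar)) <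
          ENNReal.ofReal (L - d0 / 2) := by
        refine lt_of_le_of_lt hcheb ?_
        have h1 : L - δ L dbar ≤ L - d0 := by
          have := min_le_left (δ L dbar) (L / 2); linarith
        refine lt_of_le_of_lt (ENNReal.ofReal_le_ofReal h1) ?_
        rw [ENNReal.ofReal_lt_ofReal_iff (by linarith)]
        linarith
      rw [chebyshevRadius] at hlt
      obtain ⟨w, hw⟩ := iInf_lt_iff.mp hlt
      have hIw : I w ≤ L - d0 / 2 := by
        refine Filter.limsup_le_of_le (hcob w) ?_
        filter_upwards [hev] with n hn
        have h3 : edist w (x n) < ENNReal.ofReal (L - d0 / 2) :=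
          lt_of_le_of_lt (le_iSup₂ (f := fun u (_ : u ∈ _) => edist w u) (x n) hn) hw
        rw [edist_dist, ENNReal.ofReal_lt_ofReal_iff_of_nonneg dist_nonneg] at h3
        rw [dist_comm] at h3
        exact h3.le
      have := hLle w
      linarith
  -- construct a minimizing sequence
  have hex : ∀ k : ℕ, ∃ yy : E, I yy < L + 1 / (k + 1) := by
    intro k
    have : L < L + 1 / (k + 1) := by
      have : (0 : ℝ) < 1 / (k + 1) := by positivity
      linarith
    exact exists_lt_of_ciInf_lt this
  choose y0 hy0 using hex
  have hy0tend : Filter.Tendsto (fun k => I (y0 k)) Filter.atTop (nhds L) := by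
    have hupper : Filter.Tendsto (fun k : ℕ => L + 1 / (k + 1)) Filter.atTop (nhds (L + 0)) :=
      tendsto_const_nhds.add tendsto_one_div_add_atTop_nhds_zero_nat
    rw [add_zero] at hupper
    exact tendsto_of_tendsto_of_tendsto_of_le_of_le tendsto_const_nhds hupper
      (fun k => hLle (y0 k)) (fun k => (hy0 k).le)
  have hcauchy : CauchySeq y0 := by
    rw [Metric.cauchySeq_iff]
    intro ε hε
    obtain ⟨ε', hε', hkey⟩ := key ε hε
    obtain ⟨N, hN⟩ := Filter.eventually_atTop.mp
      (hy0tend.eventually_lt_const (lt_add_of_pos_right L hε'))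
    exact ⟨N, fun m hm n hn => hkey _ _ (hN m hm) (hN n hn)⟩
  obtain ⟨c, hc⟩ := cauchySeq_tendsto_of_complete hcauchy
  have hIc : I c ≤ L := by
    have hdt : Filter.Tendsto (fun k => dist (y0 k) c) Filter.atTop (nhds 0) :=
      tendsto_iff_dist_tendsto_zero.mp hc
    have htend : Filter.Tendsto (fun k => I (y0 k) + dist (y0 k) c) Filter.atTop
        (nhds (L + 0)) := hy0tend.add hdt
    rw [add_zero] at htend
    exact ge_of_tendsto htend (Filter.Eventually.of_forall fun k => hLip c (y0 k))
  have hcenter : AsympCenter x c := fun y' => (hIc.trans (hLle y') : I c ≤ I y')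
  refine ⟨c, hcenter, ?_, ?_⟩
  · intro c' hc'
    have h1 : I c' ≤ L := (hc' c).trans hIc
    by_contra hne
    obtain ⟨ε', hε', hkey⟩ := key (dist c' c) (dist_pos.mpr hne)
    exact lt_irrefl _ (hkey c' c (by linarith) (by linarith))
  · intro yseq hys
    rw [Metric.tendsto_atTop]
    intro ε hε
    obtain ⟨ε', hε', hkey⟩ := key ε hε
    obtain ⟨N, hN⟩ := Filter.eventually_atTop.mp
      (hys.eventually_lt_const (lt_add_of_pos_right L hε'))
    exact ⟨N, fun n hn => hkey _ _ (hN n hn) (by linarith)⟩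
end
end

section
/- Let (E,d) be a complete uniform SR (Staples rotund) metric space. Then every bounded sequence in E has a subsequence which has a polar limit in E. -/
open Filter Metric ENNReal MeasureTheory

noncomputable section

variable {E : Type*} [MetricSpace E]

namespace SR15

variable {E : Type*} [MetricSpace E]

/-- boundedness hypothesis convenient form -/
def Bdd (x : ℕ → E) : Prop := ∀ y : E, ∃ C : ℝ, ∀ n, dist (x n) y ≤ C

lemma Bdd.comp {x : ℕ → E} (hx : Bdd x) (k : ℕ → ℕ) : Bdd (fun n => x (k n)) :=
  fun y => (hx y).imp fun _C hC n => hC (k n)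

/-- asymptotic "radius at y" -/
def Ifun (x : ℕ → E) (y : E) : ℝ := limsup (fun n => dist (x n) y) atTop

lemma bddUnder {x : ℕ → E} (hx : Bdd x) (y : E) :
    IsBoundedUnder (· ≤ ·) atTop (fun n => dist (x n) y) :=
  isBoundedUnder_of ((hx y).imp fun _C hC => hC)

lemma cobdd (x : ℕ → E) (y : E) :
    IsCoboundedUnder (· ≤ ·) atTop (fun n => dist (x n) y) :=
  isCoboundedUnder_le_of_le atTop (x := 0) (fun n => dist_nonneg)

lemma Ifun_nonneg {x : ℕ → E} (hx : Bdd x) (y : E) : 0 ≤ Ifun x y :=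
  le_limsup_of_frequently_le (Frequently.of_forall fun _n => dist_nonneg) (bddUnder hx y)

lemma Ifun_le {x : ℕ → E} {y : E} {a : ℝ} (h : ∀ᶠ n in atTop, dist (x n) y ≤ a) :
    Ifun x y ≤ a :=
  limsup_le_of_le (cobdd x y) h

lemma ev_lt_of_Ifun_lt {x : ℕ → E} (hx : Bdd x) {y : E} {a : ℝ} (h : Ifun x y < a) :
    ∀ᶠ n in atTop, dist (x n) y < a :=
  eventually_lt_of_limsup_lt h (bddUnder hx y)

lemma Ifun_triangle {x : ℕ → E} (hx : Bdd x) (p q : E) :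
    Ifun x p ≤ Ifun x q + dist q p := by
  apply le_of_forall_sub_le
  intro ε hε
  rw [sub_le_iff_le_add]
  have h1 : ∀ᶠ n in atTop, dist (x n) q < Ifun x q + ε :=
    ev_lt_of_Ifun_lt hx (by linarith)
  have : Ifun x p ≤ Ifun x q + ε + dist q p := by
    apply Ifun_le
    filter_upwards [h1] with n hn
    calc dist (x n) p ≤ dist (x n) q + dist q p := dist_triangle _ _ _
      _ ≤ Ifun x q + ε + dist q p := by linarith
  linarith

/-- asymptotic radius -/
def ar (x : ℕ → E) : ℝ := ⨅ y : E, Ifun x y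

lemma bddBelow_Ifun {x : ℕ → E} (hx : Bdd x) : BddBelow (Set.range (Ifun x)) := by
  refine ⟨0, ?_⟩; rintro _ ⟨y, rfl⟩; exact Ifun_nonneg hx y

lemma ar_le {x : ℕ → E} (hx : Bdd x) (y : E) : ar x ≤ Ifun x y :=
  ciInf_le (bddBelow_Ifun hx) y

lemma ar_nonneg {x : ℕ → E} (hx : Bdd x) : 0 ≤ ar x := by
  haveI : Nonempty E := ⟨x 0⟩
  exact le_ciInf fun y => Ifun_nonneg hx y

lemma exists_Ifun_lt {x : ℕ → E} {a : ℝ} [Nonempty E] (h : ar x < a) :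
    ∃ y, Ifun x y < a :=
  exists_lt_of_ciInf_lt h

lemma Ifun_comp_le {x : ℕ → E} (hx : Bdd x) {k : ℕ → ℕ} (hk : StrictMono k) (y : E) :
    Ifun (fun n => x (k n)) y ≤ Ifun x y := by
  have h1 : Ifun (fun n => x (k n)) y
      = limsup (fun n => dist (x n) y) (map k atTop) := by
    rw [Ifun, ← limsup_comp]; rfl
  rw [h1, Ifun]
  haveI : NeBot (map k atTop) := map_neBot
  exact limsup_le_limsup_of_le hk.tendsto_atTop
    (isCoboundedUnder_le_of_le (map k atTop) (x := 0) fun _ => dist_nonneg)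
    (bddUnder hx y)

lemma ar_comp_le {x : ℕ → E} (hx : Bdd x) {k : ℕ → ℕ} (hk : StrictMono k) :
    ar (fun n => x (k n)) ≤ ar x := by
  haveI : Nonempty E := ⟨x 0⟩
  exact le_ciInf fun y => (ar_le (hx.comp k) y).trans (Ifun_comp_le hx hk y)

lemma Ifun_shift (x : ℕ → E) (m : ℕ) (y : E) :
    Ifun (fun n => x (n + m)) y = Ifun x y := by
  rw [Ifun, Ifun]
  conv_rhs => rw [← map_add_atTop_eq_nat m, ← limsup_comp]
  rfl

lemma ar_shift (x : ℕ → E) (m : ℕ) : ar (fun n => x (n + m)) = ar x :=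
  iInf_congr fun y => Ifun_shift x m y

/-! ### Diagonal construction -/

abbrev SubT : Type := {f : ℕ → ℕ // StrictMono f}

instance : Nonempty SubT := ⟨⟨id, strictMono_id⟩⟩

/-- iterated composition of a family of subsequences, starting at index `m` -/
def Uc (h : ℕ → ℕ → ℕ) (m p : ℕ) : ℕ → ℕ :=
  Nat.rec id (fun p' u => u ∘ h (m + p')) p

lemma Uc_succ (h : ℕ → ℕ → ℕ) (m p : ℕ) : Uc h m (p + 1) = Uc h m p ∘ h (m + p) := rfl

lemma Uc_strict {h : ℕ → ℕ → ℕ} (hh : ∀ k, StrictMono (h k)) (m : ℕ) :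
    ∀ p, StrictMono (Uc h m p) := by
  intro p
  induction p with
  | zero => exact strictMono_id
  | succ p ih => exact ih.comp (hh (m + p))

lemma Uc_add (h : ℕ → ℕ → ℕ) (m : ℕ) : ∀ p, Uc h 0 (m + p) = Uc h 0 m ∘ Uc h m p := by
  intro p
  induction p with
  | zero => rfl
  | succ p ih =>
    have h0 := Uc_succ h 0 (m + p)
    rw [Nat.zero_add] at h0
    rw [Nat.add_succ m p, h0, ih]
    rfl

/-- the packaged recursive construction of nested subsequences -/
def GSub (F : ℕ → SubT → SubT) (m : ℕ) : SubT :=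
  Nat.rec (⟨id, strictMono_id⟩ : SubT)
    (fun m' g => ⟨g.1 ∘ (F m' g).1, g.2.comp (F m' g).2⟩) m

lemma GSub_succ (F : ℕ → SubT → SubT) (m : ℕ) :
    (GSub F (m + 1)).1 = (GSub F m).1 ∘ (F m (GSub F m)).1 := rfl

lemma GSub_eq_Uc (F : ℕ → SubT → SubT) :
    ∀ m, (GSub F m).1 = Uc (fun k => (F k (GSub F k)).1) 0 m := by
  intro m
  induction m with
  | zero => rfl
  | succ m ih =>
    have h0 : Uc (fun k => (F k (GSub F k)).1) 0 (m + 1)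
        = Uc (fun k => (F k (GSub F k)).1) 0 m ∘ (F m (GSub F m)).1 := by
      have := Uc_succ (fun k => (F k (GSub F k)).1) 0 m
      rwa [Nat.zero_add] at this
    rw [GSub_succ, h0, ih]

/-- the diagonal-type function: for `q ≥ m`, the index of `q`-th diagonal term inside
the `m`-th subsequence -/
def Fd (h : ℕ → ℕ → ℕ) (m q : ℕ) : ℕ := Uc h m (q - m) q

lemma Fd_succ_lt {h : ℕ → ℕ → ℕ} (hh : ∀ k, StrictMono (h k)) {m q : ℕ} (hmq : m ≤ q) :
    Fd h m q < Fd h m (q + 1) := by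
  have h1 : q + 1 - m = (q - m) + 1 := by omega
  rw [Fd, Fd, h1]
  show Uc h m (q - m) q < Uc h m (q - m) (h (m + (q - m)) (q + 1))
  apply Uc_strict hh
  have h2 : m + (q - m) = q := by omega
  have := (hh (m + (q - m))).le_apply (x := q + 1)
  omega

lemma Fd_strict {h : ℕ → ℕ → ℕ} (hh : ∀ k, StrictMono (h k)) {m q q' : ℕ}
    (hmq : m ≤ q) (hqq : q < q') : Fd h m q < Fd h m q' := by
  induction q' with
  | zero => omega
  | succ q'' ih =>
    rcases Nat.lt_succ_iff_lt_or_eq.1 hqq with h' | h'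
    · exact (ih h').trans (Fd_succ_lt hh (by omega))
    · subst h'; exact Fd_succ_lt hh hmq

lemma GSub_Fd (F : ℕ → SubT → SubT) {m q : ℕ} (hmq : m ≤ q) :
    (GSub F q).1 q = (GSub F m).1 (Fd (fun k => (F k (GSub F k)).1) m q) := by
  have h1 : q = m + (q - m) := by omega
  rw [Fd, GSub_eq_Uc F q, GSub_eq_Uc F m]
  conv_lhs => rw [h1]
  rw [Uc_add (fun k => (F k (GSub F k)).1) m (q - m)]
  simp only [Function.comp_apply]
  rw [show m + (q - m) = q from h1.symm]

/-! ### Existence of a regular subsequence -/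

lemma exists_regular (x : ℕ → E) (hx : Bdd x) :
    ∃ k : ℕ → ℕ, StrictMono k ∧ ∀ j : ℕ → ℕ, StrictMono j →
      ar (fun n => x (k (j n))) = ar (fun n => x (k n)) := by
  haveI : Nonempty E := ⟨x 0⟩
  -- the infimum of asymptotic radii over subsequences of a given subsequence
  set ρ : (ℕ → ℕ) → ℝ := fun g => ⨅ j : SubT, ar (fun n => x (g (j.1 n))) with hρ
  have hρ_le : ∀ g : ℕ → ℕ, ∀ j : SubT, ρ g ≤ ar (fun n => x (g (j.1 n))) := by
    intro g j
    apply ciInf_le _ j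
    refine ⟨0, ?_⟩
    rintro _ ⟨j', rfl⟩
    exact ar_nonneg (hx.comp _)
  -- choose at each stage an almost optimal subsequence
  have step : ∀ (m : ℕ) (g : SubT), ∃ h : SubT,
      ar (fun n => x (g.1 (h.1 n))) < ρ g.1 + 1 / (m + 1) := by
    intro m g
    have : ρ g.1 < ρ g.1 + 1 / (m + 1) := by
      have : (0:ℝ) < 1 / (m + 1) := by positivity
      linarith
    exact exists_lt_of_ciInf_lt this
  choose Fc hFc using step
  set G : ℕ → SubT := GSub Fc with hG
  set h : ℕ → ℕ → ℕ := fun k => (Fc k (G k)).1 with hhdef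
  have hh : ∀ k, StrictMono (h k) := fun k => (Fc k (G k)).2
  -- the diagonal sequence
  set d : ℕ → ℕ := fun q => (G q).1 q with hd
  have hdFd : ∀ {m q : ℕ}, m ≤ q → d q = (G m).1 (Fd h m q) := by
    intro m q hmq
    exact GSub_Fd Fc hmq
  have hdmono : StrictMono d := by
    intro a b hab
    rw [hdFd (Nat.zero_le a), hdFd (Nat.zero_le b)]
    have : (G 0).1 = id := rfl
    rw [this]
    exact Fd_strict hh (Nat.zero_le a) hab
  refine ⟨d, hdmono, ?_⟩
  intro j hj
  have hxd : Bdd (fun n => x (d n)) := hx.comp d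
  apply le_antisymm
  · exact ar_comp_le hxd hj
  · -- the hard direction
    apply le_of_forall_sub_le
    intro ε hε
    obtain ⟨m, hm⟩ := exists_nat_one_div_lt (K := ℝ) hε
    rw [sub_le_iff_le_add]
    -- tail of the diagonal sits inside `G (m+1)`
    have tail1 : ar (fun n => x (d n)) ≤ ar (fun n => x ((G (m+1)).1 n)) := by
      have e1 : ar (fun n => x (d n)) = ar (fun n => x (d (n + (m+1)))) :=
        (ar_shift (fun n => x (d n)) (m+1)).symm
      have e2 : ∀ n, d (n + (m+1)) = (G (m+1)).1 (Fd h (m+1) (n + (m+1))) := by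
        intro n; exact hdFd (by omega)
      have hw : StrictMono (fun n => Fd h (m+1) (n + (m+1))) := by
        intro a b hab
        exact Fd_strict hh (by omega) (by omega)
      calc ar (fun n => x (d n)) = ar (fun n => x (d (n + (m+1)))) := e1
        _ = ar (fun n => x ((G (m+1)).1 (Fd h (m+1) (n + (m+1))))) := by
            congr 1; funext n; rw [e2 n]
        _ ≤ ar (fun n => x ((G (m+1)).1 n)) := ar_comp_le (hx.comp _) hw
    -- `G (m+1)` was chosen almost optimal among subsequences of `G m`
    have opt : ar (fun n => x ((G (m+1)).1 n)) < ρ (G m).1 + 1 / (m + 1) := by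
      have e3 : ∀ n, (G (m+1)).1 n = (G m).1 (h m n) := by
        intro n
        simp only [hhdef, hG, GSub_succ, Function.comp_apply]
      have := hFc m (G m)
      calc ar (fun n => x ((G (m+1)).1 n)) = ar (fun n => x ((G m).1 (h m n))) :=
            congrArg ar (funext fun n => by rw [e3 n])
        _ < ρ (G m).1 + 1 / (m + 1) := this
    -- the subsequence `d ∘ j` is, after a shift, a subsequence of `G m`
    have sub2 : ρ (G m).1 ≤ ar (fun n => x (d (j n))) := by
      have e4 : ar (fun n => x (d (j n))) = ar (fun n => x (d (j (n + m)))) :=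
        (ar_shift (fun n => x (d (j n))) m).symm
      have hjm : ∀ n, m ≤ j (n + m) := fun n => le_trans (by omega) (hj.le_apply)
      have e5 : ∀ n, d (j (n + m)) = (G m).1 (Fd h m (j (n + m))) := fun n => hdFd (hjm n)
      have hv : StrictMono (fun n => Fd h m (j (n + m))) := by
        intro a b hab
        exact Fd_strict hh (hjm a) (hj (by omega))
      have := hρ_le (G m).1 ⟨fun n => Fd h m (j (n + m)), hv⟩
      calc ρ (G m).1 ≤ ar (fun n => x ((G m).1 (Fd h m (j (n + m))))) := this
        _ = ar (fun n => x (d (j (n + m)))) := by congr 1; funext n; rw [e5 n]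
        _ = ar (fun n => x (d (j n))) := e4.symm
    have h1m : (1:ℝ) / (m + 1) < ε := hm
    apply le_of_lt
    calc ar (fun n => x (d n)) ≤ ar (fun n => x ((G (m+1)).1 n)) := tail1
      _ < ρ (G m).1 + 1 / (m + 1) := opt
      _ ≤ ar (fun n => x (d (j n))) + 1 / (m + 1) := by linarith [sub2]
      _ ≤ ar (fun n => x (d (j n))) + ε := by linarith

/-! ### The SR squeeze -/

lemma squeeze {δ : ℝ → ℝ → ℝ}
    (hδpos : ∀ r dbar : ℝ, 0 < r → 0 < dbar → 0 < δ r dbar)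
    (hδ : ∀ r dbar : ℝ, 0 < r → 0 < dbar → ∀ x y : E, dbar ≤ dist x y →
      chebyshevRadius
          (Metric.closedBall x (r + δ r dbar) ∩ Metric.closedBall y (r + δ r dbar)) ≤
        ENNReal.ofReal (r - δ r dbar))
    {r dbar : ℝ} (hr : 0 < r) (hdbar : 0 < dbar) (a b : E) (hab : dbar ≤ dist a b)
    (v : ℕ → E)
    (hva : ∀ᶠ n in atTop, dist (v n) a ≤ r + δ r dbar)
    (hvb : ∀ᶠ n in atTop, dist (v n) b ≤ r + δ r dbar) :
    ∃ z : E, Ifun v z < r := by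
  set δ' := δ r dbar with hδ'
  have hδ'pos : 0 < δ' := hδpos r dbar hr hdbar
  set ε' : ℝ := min (δ' / 2) (r / 2) with hε'
  have hε'pos : 0 < ε' := lt_min (by linarith) (by linarith)
  set X : Set E := Metric.closedBall a (r + δ') ∩ Metric.closedBall b (r + δ') with hX
  have hcheb : chebyshevRadius X ≤ ENNReal.ofReal (r - δ') := hδ r dbar hr hdbar a b hab
  have hlt : chebyshevRadius X < ENNReal.ofReal (r - δ') + ENNReal.ofReal ε' :=
    lt_of_le_of_lt hcheb
      (ENNReal.lt_add_right ENNReal.ofReal_ne_top (ne_of_gt (ENNReal.ofReal_pos.2 hε'pos)))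
  rw [chebyshevRadius] at hlt
  obtain ⟨z, hz⟩ := iInf_lt_iff.1 hlt
  refine ⟨z, ?_⟩
  set s : ℝ := max (r - δ') 0 + ε' with hs
  have hsr : s < r := by
    rcases le_or_gt δ' r with h | h
    · have h1 : max (r - δ') 0 = r - δ' := max_eq_left (by linarith)
      have h2 : ε' ≤ δ' / 2 := min_le_left _ _
      rw [hs, h1]; linarith
    · have h1 : max (r - δ') 0 = 0 := max_eq_right (by linarith)
      have h2 : ε' ≤ r / 2 := min_le_right _ _
      rw [hs, h1]; linarith
  have hc_ne : ENNReal.ofReal (r - δ') + ENNReal.ofReal ε' ≠ ⊤ := by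
    simp
  have hcs : (ENNReal.ofReal (r - δ') + ENNReal.ofReal ε').toReal = s := by
    rw [ENNReal.toReal_add ENNReal.ofReal_ne_top ENNReal.ofReal_ne_top,
      ENNReal.toReal_ofReal', ENNReal.toReal_ofReal hε'pos.le, hs]
  have hIle : Ifun v z ≤ s := by
    apply Ifun_le
    filter_upwards [hva, hvb] with n h1 h2
    have hmem : v n ∈ X := ⟨Metric.mem_closedBall.2 h1, Metric.mem_closedBall.2 h2⟩
    have h3 : edist z (v n) ≤ ⨆ w ∈ X, edist z w := le_biSup _ hmem
    have h4 : edist z (v n) ≤ ENNReal.ofReal (r - δ') + ENNReal.ofReal ε' :=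
      h3.trans hz.le
    have h5 := ENNReal.toReal_mono hc_ne h4
    rw [hcs] at h5
    rw [dist_edist, edist_comm]
    exact h5
  exact lt_of_le_of_lt hIle hsr

/-! ### Polar limit for a regular sequence -/

lemma polar_of_regular [CompleteSpace E] (hSR : IsUniformSR E) (u : ℕ → E) (hu : Bdd u)
    (hreg : ∀ j : ℕ → ℕ, StrictMono j → ar (fun n => u (j n)) = ar u) :
    ∃ p : E, PolarLim u p := by
  haveI : Nonempty E := ⟨u 0⟩
  obtain ⟨δ, hδpos, hδ⟩ := hSR
  set r : ℝ := ar u with hr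
  have hr0 : 0 ≤ r := ar_nonneg hu
  -- choose approximate asymptotic centers
  have hyex : ∀ m : ℕ, ∃ y : E, Ifun u y < r + 1 / (m + 1) := by
    intro m
    apply exists_Ifun_lt
    have : (0:ℝ) < 1 / (m + 1) := by positivity
    linarith
  choose y hy using hyex
  -- the approximate centers form a Cauchy sequence
  have hCauchy : CauchySeq y := by
    rw [Metric.cauchySeq_iff]
    intro ε hε
    rcases eq_or_lt_of_le hr0 with hr0' | hrpos
    · -- r = 0
      obtain ⟨N, hN⟩ := exists_nat_one_div_lt (K := ℝ) (show (0:ℝ) < ε / 4 by linarith)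
      refine ⟨N, fun m hm l hl => ?_⟩
      have h1 : ∀ᶠ n in atTop, dist (u n) (y m) < r + 1 / (m + 1) :=
        ev_lt_of_Ifun_lt hu (hy m)
      have h2 : ∀ᶠ n in atTop, dist (u n) (y l) < r + 1 / (l + 1) :=
        ev_lt_of_Ifun_lt hu (hy l)
      obtain ⟨n, hn1, hn2⟩ := (h1.and h2).exists
      have hm' : (1:ℝ) / (m + 1) ≤ 1 / (N + 1) := by
        apply one_div_le_one_div_of_le (by positivity)
        exact_mod_cast by omega
      have hl' : (1:ℝ) / (l + 1) ≤ 1 / (N + 1) := by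
        apply one_div_le_one_div_of_le (by positivity)
        exact_mod_cast by omega
      have := dist_triangle (y m) (u n) (y l)
      rw [dist_comm (y m) (u n)] at this
      calc dist (y m) (y l) ≤ dist (u n) (y m) + dist (u n) (y l) := this
        _ < (r + 1 / (m + 1)) + (r + 1 / (l + 1)) := by linarith
        _ ≤ ε / 4 + ε / 4 := by rw [← hr0']; simp only [zero_add]; linarith [hN]
        _ < ε := by linarith
    · -- r > 0
      set δ' := δ r ε with hδ'
      have hδ'pos : 0 < δ' := hδpos r ε hrpos hε
      obtain ⟨N, hN⟩ := exists_nat_one_div_lt (K := ℝ) hδ'pos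
      refine ⟨N, fun m hm l hl => ?_⟩
      by_contra hcon
      push_neg at hcon
      have hml : ε ≤ dist (y m) (y l) := hcon
      have hbound : ∀ k : ℕ, k ≥ N → ∀ᶠ n in atTop, dist (u n) (y k) ≤ r + δ' := by
        intro k hk
        have h1 : (1:ℝ) / (k + 1) ≤ 1 / (N + 1) := by
          apply one_div_le_one_div_of_le (by positivity)
          exact_mod_cast by omega
        have := ev_lt_of_Ifun_lt hu (hy k)
        filter_upwards [this] with n hn
        have : r + 1 / (k + 1) ≤ r + δ' := by linarith
        linarith
      obtain ⟨z, hz⟩ := squeeze hδpos hδ hrpos hε (y m) (y l) hml u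
        (hbound m hm) (hbound l hl)
      have := ar_le hu z
      rw [← hr] at this
      linarith
  obtain ⟨p, hp⟩ := cauchySeq_tendsto_of_complete hCauchy
  have hIp : Ifun u p ≤ r := by
    apply le_of_forall_sub_le
    intro ε hε
    rw [sub_le_iff_le_add]
    obtain ⟨m0, hm0⟩ := exists_nat_one_div_lt (K := ℝ) (show (0:ℝ) < ε / 2 by linarith)
    obtain ⟨N, hN⟩ := (Metric.tendsto_atTop.1 hp) (ε / 2) (by linarith)
    set m := max m0 N with hmdef
    have hm1 : m0 ≤ m := le_max_left _ _
    have hm2 : dist (y m) p < ε / 2 := hN m (le_max_right _ _)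
    have h1 : Ifun u p ≤ Ifun u (y m) + dist (y m) p := Ifun_triangle hu p (y m)
    have h2 : (1:ℝ) / (m + 1) ≤ 1 / (m0 + 1) := by
      apply one_div_le_one_div_of_le (by positivity)
      exact_mod_cast by omega
    have h3 : Ifun u (y m) < r + 1 / (m + 1) := hy m
    linarith
  -- now prove the polar limit property
  refine ⟨p, ?_⟩
  intro w hw
  have hpw : 0 < dist p w := dist_pos.2 (Ne.symm hw)
  rcases eq_or_lt_of_le hr0 with hr0' | hrpos
  · -- r = 0 : the sequence converges to p
    have h1 : Ifun u p < dist p w / 2 := lt_of_le_of_lt hIp (by linarith)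
    have h2 : ∀ᶠ n in atTop, dist (u n) p < dist p w / 2 := ev_lt_of_Ifun_lt hu h1
    obtain ⟨M, hM⟩ := eventually_atTop.1 h2
    refine ⟨M, fun n hn => ?_⟩
    have h3 := hM n hn
    have h4 := dist_triangle p (u n) w
    rw [dist_comm p (u n)] at h4
    linarith
  · -- r > 0
    set δ' := δ r (dist p w) with hδ'
    have hδ'pos : 0 < δ' := hδpos r (dist p w) hrpos hpw
    have hev2 : ∀ᶠ n in atTop, r + δ' / 2 < dist (u n) w := by
      by_contra hcon
      rw [Filter.not_eventually] at hcon
      have hfreq : ∃ᶠ n in atTop, dist (u n) w ≤ r + δ' / 2 := by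
        apply hcon.mono
        intro n hn
        linarith [not_lt.1 hn]
      obtain ⟨j, hj, hjw⟩ := extraction_of_frequently_atTop hfreq
      have hva : ∀ᶠ n in atTop, dist (u (j n)) p ≤ r + δ' := by
        have h5 : Ifun u p < r + δ' := lt_of_le_of_lt hIp (by linarith)
        obtain ⟨N, hN⟩ := eventually_atTop.1 (ev_lt_of_Ifun_lt hu h5)
        refine eventually_atTop.2 ⟨N, fun n hn => ?_⟩
        exact le_of_lt (hN (j n) (hn.trans hj.le_apply))
      have hvb : ∀ᶠ n in atTop, dist (u (j n)) w ≤ r + δ' :=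
        Eventually.of_forall fun n => (hjw n).trans (by linarith)
      obtain ⟨z, hz⟩ := squeeze hδpos hδ hrpos hpw p w le_rfl (fun n => u (j n)) hva hvb
      have h6 : ar (fun n => u (j n)) ≤ Ifun (fun n => u (j n)) z := ar_le (hu.comp j) z
      have h7 : ar (fun n => u (j n)) = r := hreg j hj
      linarith
    have hev1 : ∀ᶠ n in atTop, dist (u n) p < r + δ' / 2 :=
      ev_lt_of_Ifun_lt hu (lt_of_le_of_lt hIp (by linarith))
    obtain ⟨M, hM⟩ := eventually_atTop.1 (hev1.and hev2)
    refine ⟨M, fun n hn => ?_⟩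
    obtain ⟨h8, h9⟩ := hM n hn
    linarith

end SR15

open SR15 in
/-- in a complete uniform SR space, every bounded sequence has a
subsequence which has a polar limit. -/
theorem stmt_15 [CompleteSpace E] (hSR : IsUniformSR E) (x : ℕ → E)
    (hb : Bornology.IsBounded (Set.range x)) :
    ∃ (k : ℕ → ℕ) (p : E), StrictMono k ∧ PolarLim (fun n => x (k n)) p := by
  have hx : SR15.Bdd x := by
    obtain ⟨C, hC⟩ := Metric.isBounded_iff.1 hb
    intro y
    refine ⟨C + dist (x 0) y, fun n => ?_⟩
    have h1 : dist (x n) (x 0) ≤ C :=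
      hC (Set.mem_range_self n) (Set.mem_range_self 0)
    have := dist_triangle (x n) (x 0) y
    linarith
  obtain ⟨k, hk, hreg⟩ := SR15.exists_regular x hx
  obtain ⟨p, hp⟩ := SR15.polar_of_regular hSR (fun n => x (k n)) (hx.comp k) hreg
  exact ⟨k, p, hk, hp⟩
end
end

section
/- Let (E,d) be a bounded complete uniform SR (Staples rotund) metric space, let x ∈ E and let T : E → E be a nonexpansive map. Then the following are equivalent: (a) the iterations sequence (Tⁿ(x))_{n∈ℕ} has a polar limit; (b) whenever a subsequence of (Tⁿ(x))_{n∈ℕ} has a polar limit y, the point y is a fixed point of T (i.e. T(y) = y). -/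
open Filter Metric ENNReal MeasureTheory

noncomputable section

variable {E : Type*} [MetricSpace E]

set_option linter.unusedSectionVars false

namespace SRaux

variable {E : Type*} [MetricSpace E]

def Fl (y : ℕ → E) (z : E) : ℝ := Filter.limsup (fun n => dist (y n) z) Filter.atTop

def rad (y : ℕ → E) : ℝ := sInf (Set.range (Fl y))

def srad (y : ℕ → E) : ℝ := sInf {r : ℝ | ∃ k : ℕ → ℕ, StrictMono k ∧ rad (y ∘ k) = r}

variable {D : ℝ}

lemma bddA (hD : ∀ a b : E, dist a b ≤ D) (y : ℕ → E) (z : E) :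
    IsBoundedUnder (· ≤ ·) atTop (fun n => dist (y n) z) :=
  Filter.isBoundedUnder_of ⟨D, fun _ => hD _ _⟩

lemma bddB (y : ℕ → E) (z : E) : IsBoundedUnder (· ≥ ·) atTop (fun n => dist (y n) z) :=
  Filter.isBoundedUnder_of ⟨0, fun _ => dist_nonneg⟩

lemma cobdd (y : ℕ → E) (z : E) : IsCoboundedUnder (· ≤ ·) atTop (fun n => dist (y n) z) :=
  (bddB y z).isCoboundedUnder_le

lemma Fl_nonneg (hD : ∀ a b : E, dist a b ≤ D) (y : ℕ → E) (z : E) : 0 ≤ Fl y z :=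
  le_limsup_of_frequently_le
    ((Filter.Eventually.of_forall fun _ => dist_nonneg).frequently) (bddA hD y z)

lemma Fl_le {y : ℕ → E} {z : E} {a : ℝ} (h : ∀ᶠ n in atTop, dist (y n) z ≤ a) :
    Fl y z ≤ a := limsup_le_of_le (cobdd y z) h

lemma ev_lt (hD : ∀ a b : E, dist a b ≤ D) {y : ℕ → E} {z : E} {a : ℝ} (h : Fl y z < a) :
    ∀ᶠ n in atTop, dist (y n) z < a := eventually_lt_of_limsup_lt h (bddA hD y z)

lemma Fl_mono (hD : ∀ a b : E, dist a b ≤ D) {y : ℕ → E} {z w : E}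
    (h : ∀ᶠ n in atTop, dist (y n) z ≤ dist (y n) w) : Fl y z ≤ Fl y w :=
  limsup_le_limsup h (cobdd y z) (bddA hD y w)

lemma Fl_comp_le (hD : ∀ a b : E, dist a b ≤ D) (y : ℕ → E) (z : E) {k : ℕ → ℕ}
    (hk : Tendsto k atTop atTop) : Fl (y ∘ k) z ≤ Fl y z := by
  have h1 : Fl (y ∘ k) z = limsup (fun n => dist (y n) z) (map k atTop) := rfl
  rw [h1]
  refine limsup_le_limsup_of_le hk ?_ (bddA hD y z)
  have hb : IsBoundedUnder (· ≥ ·) (map k atTop) (fun n => dist (y n) z) :=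
    Filter.isBoundedUnder_of ⟨0, fun _ => dist_nonneg⟩
  exact hb.isCoboundedUnder_le

lemma Fl_shift (y : ℕ → E) (z : E) (N : ℕ) : Fl (fun n => y (n + N)) z = Fl y z := by
  have h1 : Fl (fun n => y (n + N)) z = limsup (fun n => dist (y n) z) (map (· + N) atTop) := rfl
  rw [h1, map_add_atTop_eq_nat]
  rfl

lemma Fl_tendsto {y : ℕ → E} {z : E} {r : ℝ}
    (h : Tendsto (fun n => dist (y n) z) atTop (nhds r)) : Fl y z = r := h.limsup_eq

lemma dist_le_Fl (hD : ∀ a b : E, dist a b ≤ D) (y : ℕ → E) (u v : E) :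
    dist u v ≤ Fl y u + Fl y v := by
  refine le_of_forall_pos_le_add fun ε hε => ?_
  have h1 : ∀ᶠ n in atTop, dist (y n) u < Fl y u + ε / 2 := ev_lt hD (by linarith)
  have h2 : ∀ᶠ n in atTop, dist (y n) v < Fl y v + ε / 2 := ev_lt hD (by linarith)
  obtain ⟨n, hn1, hn2⟩ := (h1.and h2).exists
  have := dist_triangle u (y n) v
  rw [dist_comm u (y n)] at this
  linarith

lemma Fl_le_add (hD : ∀ a b : E, dist a b ≤ D) (y : ℕ → E) (u v : E) :
    Fl y u ≤ Fl y v + dist v u := by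
  refine le_of_forall_pos_le_add fun ε hε => ?_
  refine Fl_le ?_
  filter_upwards [ev_lt hD (show Fl y v < Fl y v + ε by linarith)] with n hn
  have := dist_triangle (y n) v u
  linarith

lemma radBddBelow (hD : ∀ a b : E, dist a b ≤ D) (y : ℕ → E) :
    BddBelow (Set.range (Fl y)) := by
  refine ⟨0, ?_⟩
  rintro _ ⟨z, rfl⟩
  exact Fl_nonneg hD y z

lemma rad_nonneg (hD : ∀ a b : E, dist a b ≤ D) (y : ℕ → E) : 0 ≤ rad y := by
  refine le_csInf ⟨Fl y (y 0), ⟨y 0, rfl⟩⟩ ?_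
  rintro _ ⟨z, rfl⟩
  exact Fl_nonneg hD y z

lemma rad_le (hD : ∀ a b : E, dist a b ≤ D) (y : ℕ → E) (z : E) : rad y ≤ Fl y z :=
  csInf_le (radBddBelow hD y) ⟨z, rfl⟩

lemma exists_Fl_lt (hD : ∀ a b : E, dist a b ≤ D) (y : ℕ → E) {ε : ℝ} (hε : 0 < ε) :
    ∃ z, Fl y z < rad y + ε := by
  have h : sInf (Set.range (Fl y)) < rad y + ε := lt_add_of_pos_right _ hε
  obtain ⟨_, ⟨z, rfl⟩, hz⟩ :=
    (csInf_lt_iff (radBddBelow hD y) ⟨Fl y (y 0), ⟨y 0, rfl⟩⟩).mp h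
  exact ⟨z, hz⟩

lemma rad_comp_le (hD : ∀ a b : E, dist a b ≤ D) (y : ℕ → E) {k : ℕ → ℕ}
    (hk : Tendsto k atTop atTop) : rad (y ∘ k) ≤ rad y := by
  refine le_csInf ⟨Fl y (y 0), ⟨y 0, rfl⟩⟩ ?_
  rintro _ ⟨z, rfl⟩
  exact (rad_le hD (y ∘ k) z).trans (Fl_comp_le hD y z hk)

lemma rad_shift (y : ℕ → E) (N : ℕ) : rad (fun n => y (n + N)) = rad y := by
  unfold rad
  have : Fl (fun n => y (n + N)) = Fl y := funext fun z => Fl_shift y z N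
  rw [this]

lemma srad_le (hD : ∀ a b : E, dist a b ≤ D) (y : ℕ → E) {k : ℕ → ℕ} (hk : StrictMono k) :
    srad y ≤ rad (y ∘ k) := by
  refine csInf_le ⟨0, ?_⟩ ⟨k, hk, rfl⟩
  rintro r ⟨k', _, rfl⟩
  exact rad_nonneg hD _

lemma exists_srad (hD : ∀ a b : E, dist a b ≤ D) (y : ℕ → E) {ε : ℝ} (hε : 0 < ε) :
    ∃ k : ℕ → ℕ, StrictMono k ∧ rad (y ∘ k) < srad y + ε := by
  have hne : {r : ℝ | ∃ k : ℕ → ℕ, StrictMono k ∧ rad (y ∘ k) = r}.Nonempty :=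
    ⟨rad y, id, strictMono_id, by rw [Function.comp_id]⟩
  have hbd : BddBelow {r : ℝ | ∃ k : ℕ → ℕ, StrictMono k ∧ rad (y ∘ k) = r} := by
    refine ⟨0, ?_⟩
    rintro r ⟨k', _, rfl⟩
    exact rad_nonneg hD _
  have h : srad y < srad y + ε := lt_add_of_pos_right _ hε
  obtain ⟨r, ⟨k, hk, hr⟩, hlt⟩ := (csInf_lt_iff hbd hne).mp h
  exact ⟨k, hk, hr ▸ hlt⟩

lemma master (hD : ∀ a b : E, dist a b ≤ D) (hSR : IsUniformSR E) :
    ∃ del : ℝ → ℝ → ℝ, (∀ r s : ℝ, 0 < r → 0 < s → 0 < del r s) ∧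
      ∀ (y : ℕ → E) (u v : E) (ρ dbar : ℝ), 0 < ρ → 0 < dbar → dbar ≤ dist u v →
        Fl y u < ρ + del ρ dbar → Fl y v < ρ + del ρ dbar →
        ∃ z, Fl y z ≤ ρ - del ρ dbar := by
  obtain ⟨δ, hpos, hδ⟩ := hSR
  refine ⟨fun r s => min (δ r s) r / 2,
    fun r s hr hs => div_pos (lt_min (hpos r s hr hs) hr) two_pos, ?_⟩
  intro y u v ρ dbar hρ hdbar huv hu hv
  set d0 := δ ρ dbar with hd0
  have hd0pos : 0 < d0 := hpos ρ dbar hρ hdbar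
  set dl := min d0 ρ / 2 with hdl
  have hdlpos : 0 < dl := div_pos (lt_min hd0pos hρ) two_pos
  have hdld : dl ≤ d0 / 2 := by
    have := min_le_left d0 ρ; rw [hdl]; linarith
  have hu' : ∀ᶠ n in atTop, dist (y n) u < ρ + d0 :=
    ev_lt hD (lt_of_lt_of_le hu (by linarith))
  have hv' : ∀ᶠ n in atTop, dist (y n) v < ρ + d0 :=
    ev_lt hD (lt_of_lt_of_le hv (by linarith))
  have hcheb := hδ ρ dbar hρ hdbar u v huv
  have hlt : chebyshevRadius
      (Metric.closedBall u (ρ + d0) ∩ Metric.closedBall v (ρ + d0)) <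
      ENNReal.ofReal (ρ - d0) + ENNReal.ofReal (dl / 2) :=
    lt_of_le_of_lt hcheb
      (ENNReal.lt_add_right ENNReal.ofReal_ne_top
        (ENNReal.ofReal_pos.mpr (by linarith)).ne')
  rw [chebyshevRadius] at hlt
  obtain ⟨z, hz⟩ := iInf_lt_iff.mp hlt
  refine ⟨z, ?_⟩
  set t : ℝ := max (ρ - d0) 0 + dl / 2 with ht
  have htnn : (0:ℝ) ≤ t := by
    have := le_max_right (ρ - d0) (0:ℝ); rw [ht]; linarith
  have htb : ENNReal.ofReal (ρ - d0) + ENNReal.ofReal (dl / 2) ≤ ENNReal.ofReal t :=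
    calc ENNReal.ofReal (ρ - d0) + ENNReal.ofReal (dl / 2)
        ≤ ENNReal.ofReal (max (ρ - d0) 0) + ENNReal.ofReal (dl / 2) :=
          add_le_add (ENNReal.ofReal_le_ofReal (le_max_left _ _)) le_rfl
      _ = ENNReal.ofReal t :=
          (ENNReal.ofReal_add (le_max_right _ _) (by linarith)).symm
  have hzd : ∀ w ∈ Metric.closedBall u (ρ + d0) ∩ Metric.closedBall v (ρ + d0),
      dist w z ≤ t := by
    intro w hw
    have h1 : edist z w ≤ ENNReal.ofReal t :=
      le_trans (le_of_lt (lt_of_le_of_lt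
        (le_iSup₂ (f := fun w (_ : w ∈ Metric.closedBall u (ρ + d0) ∩
          Metric.closedBall v (ρ + d0)) => edist z w) w hw) hz)) htb
    have := (edist_le_ofReal htnn).mp h1
    rwa [dist_comm]
  have hfin : ∀ᶠ n in atTop, dist (y n) z ≤ t := by
    filter_upwards [hu', hv'] with n h1 h2
    exact hzd _ ⟨Metric.mem_closedBall.mpr h1.le, Metric.mem_closedBall.mpr h2.le⟩
  have hFl := Fl_le hfin
  have htle : t ≤ ρ - dl := by
    rcases le_total d0 ρ with h | h
    · have hm : min d0 ρ = d0 := min_eq_left h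
      rw [ht, max_eq_left (by linarith), hdl, hm]; linarith
    · have hm : min d0 ρ = ρ := min_eq_right h
      rw [ht, max_eq_right (by linarith), hdl, hm]; linarith
  linarith


section WithDel

variable {del : ℝ → ℝ → ℝ}

lemma unique_center (hD : ∀ a b : E, dist a b ≤ D)
    (hdelpos : ∀ r s : ℝ, 0 < r → 0 < s → 0 < del r s)
    (hdel : ∀ (y : ℕ → E) (u v : E) (ρ dbar : ℝ), 0 < ρ → 0 < dbar → dbar ≤ dist u v →
      Fl y u < ρ + del ρ dbar → Fl y v < ρ + del ρ dbar → ∃ z, Fl y z ≤ ρ - del ρ dbar)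
    {y : ℕ → E} {p q : E} (hp : AsympCenter y p) (hq : AsympCenter y q) : p = q := by
  by_contra hne
  have hρq : Fl y q ≤ Fl y p := hq p
  have hρp : Fl y p ≤ Fl y q := hp q
  rcases eq_or_lt_of_le (Fl_nonneg hD y p) with h0 | h0
  · have h1 : dist p q ≤ Fl y p + Fl y q := dist_le_Fl hD y p q
    have h2 : dist p q ≤ 0 := by linarith
    exact hne (dist_le_zero.mp h2)
  · have hd : 0 < dist p q := dist_pos.mpr hne
    have hdp := hdelpos (Fl y p) (dist p q) h0 hd
    obtain ⟨z, hz⟩ := hdel y p q (Fl y p) (dist p q) h0 hd le_rfl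
      (by linarith) (by linarith)
    have h6 : Fl y p ≤ Fl y z := hp z
    linarith

lemma center_of_polar (hD : ∀ a b : E, dist a b ≤ D) {y : ℕ → E} {p : E}
    (h : PolarLim y p) : AsympCenter y p := by
  intro z
  rcases eq_or_ne z p with rfl | hz
  · exact le_rfl
  · obtain ⟨M, hM⟩ := h z hz
    exact Fl_mono hD (Filter.eventually_atTop.mpr ⟨M, fun n hn => (hM n hn).le⟩)

lemma centers_of_polar (hD : ∀ a b : E, dist a b ≤ D) {y : ℕ → E} {p : E}
    (h : PolarLim y p) {k : ℕ → ℕ} (hk : StrictMono k) : AsympCenter (y ∘ k) p := by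
  intro z
  rcases eq_or_ne z p with rfl | hz
  · exact le_rfl
  · obtain ⟨M, hM⟩ := h z hz
    refine Fl_mono hD (Filter.eventually_atTop.mpr ⟨M, fun n hn => ?_⟩)
    exact (hM (k n) (le_trans hn hk.le_apply)).le

lemma polar_of_centers (hD : ∀ a b : E, dist a b ≤ D)
    (hdelpos : ∀ r s : ℝ, 0 < r → 0 < s → 0 < del r s)
    (hdel : ∀ (y : ℕ → E) (u v : E) (ρ dbar : ℝ), 0 < ρ → 0 < dbar → dbar ≤ dist u v →
      Fl y u < ρ + del ρ dbar → Fl y v < ρ + del ρ dbar → ∃ z, Fl y z ≤ ρ - del ρ dbar)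
    {y : ℕ → E} {p : E}
    (h : ∀ k : ℕ → ℕ, StrictMono k → AsympCenter (y ∘ k) p) : PolarLim y p := by
  intro z hz
  by_contra hcon
  push_neg at hcon
  have hfreq : ∀ N, ∃ n > N, dist (y n) z ≤ dist (y n) p := by
    intro N
    obtain ⟨n, hn1, hn2⟩ := hcon (N + 1)
    exact ⟨n, Nat.lt_of_lt_of_le (Nat.lt_succ_self N) hn1, hn2⟩
  obtain ⟨k, hk, hkP⟩ := Nat.exists_strictMono_subsequence hfreq
  have hzc : AsympCenter (y ∘ k) z := by
    intro w
    have h1 : Fl (y ∘ k) z ≤ Fl (y ∘ k) p :=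
      Fl_mono hD (Filter.Eventually.of_forall fun n => hkP n)
    exact le_trans h1 (h k hk w)
  exact hz (unique_center hD hdelpos hdel hzc (h k hk))

lemma exists_center [CompleteSpace E] (hD : ∀ a b : E, dist a b ≤ D)
    (hdelpos : ∀ r s : ℝ, 0 < r → 0 < s → 0 < del r s)
    (hdel : ∀ (y : ℕ → E) (u v : E) (ρ dbar : ℝ), 0 < ρ → 0 < dbar → dbar ≤ dist u v →
      Fl y u < ρ + del ρ dbar → Fl y v < ρ + del ρ dbar → ∃ z, Fl y z ≤ ρ - del ρ dbar)
    (y : ℕ → E) : ∃ c : E, AsympCenter y c := by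
  have hsel : ∀ i : ℕ, ∃ z, Fl y z < rad y + 1 / (i + 1) :=
    fun i => exists_Fl_lt hD y (by positivity)
  choose zs hzs using hsel
  have hcauchy : CauchySeq zs := by
    rw [Metric.cauchySeq_iff]
    intro ε hε
    rcases eq_or_lt_of_le (rad_nonneg hD y) with h0 | h0
    · obtain ⟨N, hN⟩ := exists_nat_one_div_lt (show (0:ℝ) < ε / 2 by linarith)
      refine ⟨N, fun m hm n hn => ?_⟩
      have hb : ∀ j, N ≤ j → Fl y (zs j) < ε / 2 := by
        intro j hj
        have h1 : 1 / ((j:ℝ) + 1) ≤ 1 / ((N:ℝ) + 1) := by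
          apply one_div_le_one_div_of_le (by positivity)
          have : (N:ℝ) ≤ (j:ℝ) := by exact_mod_cast hj
          linarith
        have h2 := hzs j
        linarith
      have h3 := dist_le_Fl hD y (zs m) (zs n)
      have h4 := hb m hm
      have h5 := hb n hn
      linarith
    · have hdp : 0 < del (rad y) ε := hdelpos _ _ h0 hε
      obtain ⟨N, hN⟩ := exists_nat_one_div_lt hdp
      refine ⟨N, fun m hm n hn => ?_⟩
      by_contra hcon
      push_neg at hcon
      have hb : ∀ j, N ≤ j → Fl y (zs j) < rad y + del (rad y) ε := by
        intro j hj
        have h1 : 1 / ((j:ℝ) + 1) ≤ 1 / ((N:ℝ) + 1) := by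
          apply one_div_le_one_div_of_le (by positivity)
          have : (N:ℝ) ≤ (j:ℝ) := by exact_mod_cast hj
          linarith
        have h2 := hzs j
        linarith
      obtain ⟨z, hz⟩ := hdel y (zs m) (zs n) (rad y) ε h0 hε hcon (hb m hm) (hb n hn)
      have := rad_le hD y z
      linarith
  obtain ⟨c, hc⟩ := cauchySeq_tendsto_of_complete hcauchy
  refine ⟨c, fun w => ?_⟩
  have hcr : Fl y c ≤ rad y := by
    refine le_of_forall_pos_le_add fun ε hε => ?_
    obtain ⟨i, hi⟩ := exists_nat_one_div_lt (show (0:ℝ) < ε / 2 by linarith)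
    obtain ⟨N, hN⟩ := Metric.tendsto_atTop.mp hc (ε / 2) (by linarith)
    set j := max N i with hj
    have h1 : Fl y c ≤ Fl y (zs j) + dist (zs j) c := Fl_le_add hD y c (zs j)
    have h2 := hzs j
    have h3 := hN j (le_max_left _ _)
    have h4 : 1 / ((j:ℝ) + 1) ≤ 1 / ((i:ℝ) + 1) := by
      apply one_div_le_one_div_of_le (by positivity)
      have : (i:ℝ) ≤ (j:ℝ) := by exact_mod_cast le_max_right N i
      linarith
    linarith
  exact le_trans hcr (rad_le hD y w)

end WithDel


lemma Fl_mono2 (hD : ∀ a b : E, dist a b ≤ D) {y w : ℕ → E} {z u : E}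
    (h : ∀ᶠ n in atTop, dist (y n) z ≤ dist (w n) u) : Fl y z ≤ Fl w u :=
  limsup_le_limsup h (cobdd y z) (bddA hD w u)

def chainK (x : ℕ → E) (pk : (ℕ → E) → ℕ → ℕ → ℕ) : ℕ → ℕ → ℕ :=
  fun i => Nat.rec id (fun j Kj => Kj ∘ pk (x ∘ Kj) j) i

def chainRest (x : ℕ → E) (pk : (ℕ → E) → ℕ → ℕ → ℕ) (i : ℕ) : ℕ → ℕ → ℕ :=
  fun j => Nat.rec id (fun j' r => if i ≤ j' then r ∘ pk (x ∘ chainK x pk j') j' else id) j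

section Chain

variable {x : ℕ → E} {pk : (ℕ → E) → ℕ → ℕ → ℕ}

lemma chainK_succ (x : ℕ → E) (pk : (ℕ → E) → ℕ → ℕ → ℕ) (j : ℕ) :
    chainK x pk (j + 1) = chainK x pk j ∘ pk (x ∘ chainK x pk j) j := rfl

lemma chainRest_succ (x : ℕ → E) (pk : (ℕ → E) → ℕ → ℕ → ℕ) (i j : ℕ) :
    chainRest x pk i (j + 1) =
      if i ≤ j then chainRest x pk i j ∘ pk (x ∘ chainK x pk j) j else id := rfl

lemma chainK_mono (hmono : ∀ y i, StrictMono (pk y i)) : ∀ i, StrictMono (chainK x pk i) := by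
  intro i
  induction i with
  | zero => exact strictMono_id
  | succ j ih => exact ih.comp (hmono _ _)

lemma chainRest_mono (hmono : ∀ y i, StrictMono (pk y i)) (i : ℕ) :
    ∀ j, StrictMono (chainRest x pk i j) := by
  intro j
  induction j with
  | zero => exact strictMono_id
  | succ j ih =>
    rw [chainRest_succ]
    split
    · exact ih.comp (hmono _ _)
    · exact strictMono_id

lemma chainRest_id {i : ℕ} : ∀ {j : ℕ}, j ≤ i → chainRest x pk i j = id := by
  intro j
  induction j with
  | zero => intro _; rfl
  | succ j _ =>
    intro h
    rw [chainRest_succ, if_neg (by omega)]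

lemma chainK_rest (i : ℕ) : ∀ j, i ≤ j → chainK x pk j = chainK x pk i ∘ chainRest x pk i j := by
  intro j
  induction j with
  | zero =>
    intro h
    have h0 : i = 0 := by omega
    subst h0
    rfl
  | succ j ih =>
    intro h
    rcases le_or_gt i j with h' | h'
    · calc chainK x pk (j + 1) = chainK x pk j ∘ pk (x ∘ chainK x pk j) j := rfl
        _ = (chainK x pk i ∘ chainRest x pk i j) ∘ pk (x ∘ chainK x pk j) j := by rw [ih h']
        _ = chainK x pk i ∘ chainRest x pk i (j + 1) := by
            rw [chainRest_succ, if_pos h']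
            rfl
    · have hij : i = j + 1 := by omega
      subst hij
      rw [chainRest_id le_rfl]
      rfl

end Chain

lemma exists_polar_subseq [CompleteSpace E] (hD : ∀ a b : E, dist a b ≤ D)
    {del : ℝ → ℝ → ℝ}
    (hdelpos : ∀ r s : ℝ, 0 < r → 0 < s → 0 < del r s)
    (hdel : ∀ (y : ℕ → E) (u v : E) (ρ dbar : ℝ), 0 < ρ → 0 < dbar → dbar ≤ dist u v →
      Fl y u < ρ + del ρ dbar → Fl y v < ρ + del ρ dbar → ∃ z, Fl y z ≤ ρ - del ρ dbar)
    (x : ℕ → E) : ∃ k : ℕ → ℕ, StrictMono k ∧ ∃ p : E, PolarLim (x ∘ k) p := by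
  have hpick : ∀ (y : ℕ → E) (i : ℕ),
      ∃ k : ℕ → ℕ, StrictMono k ∧ rad (y ∘ k) < srad y + 1 / (i + 1) :=
    fun y i => exists_srad hD y (by positivity)
  choose pk hpkmono hpklt using hpick
  set hfun : ℕ → ℕ → ℕ := fun i j => chainRest x pk i j j with hhfun
  have hhmono : ∀ i, StrictMono (hfun i) := by
    intro i
    apply strictMono_nat_of_lt_succ
    intro j
    rcases le_or_gt i j with hij | hij
    · have h1 : hfun i (j + 1) = chainRest x pk i j (pk (x ∘ chainK x pk j) j (j + 1)) := by
        simp only [hhfun, chainRest_succ, if_pos hij]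
        rfl
      have h2 : j < pk (x ∘ chainK x pk j) j (j + 1) :=
        lt_of_lt_of_le (Nat.lt_succ_self j) (hpkmono _ _).le_apply
      rw [h1]
      exact (chainRest_mono hpkmono i j) h2
    · have h1 : hfun i j = j := by
        simp only [hhfun, chainRest_id hij.le, id]
      have h2 : hfun i (j + 1) = j + 1 := by
        simp only [hhfun, chainRest_id (show j + 1 ≤ i by omega), id]
      omega
  have hdiag : ∀ i j, i ≤ j → chainK x pk j j = chainK x pk i (hfun i j) := by
    intro i j hij
    rw [chainK_rest i j hij]
    rfl
  set d : ℕ → ℕ := fun j => chainK x pk j j with hd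
  have hdmono : StrictMono d := by
    apply strictMono_nat_of_lt_succ
    intro j
    have h2 : j < pk (x ∘ chainK x pk j) j (j + 1) :=
      lt_of_lt_of_le (Nat.lt_succ_self j) (hpkmono _ _).le_apply
    have h3 : d (j + 1) = chainK x pk j (pk (x ∘ chainK x pk j) j (j + 1)) := rfl
    rw [h3]
    exact (chainK_mono hpkmono j) h2
  have htail : ∀ (v : ℕ → ℕ), StrictMono v → ∀ i : ℕ,
      (fun n => (x ∘ d ∘ v) (n + i)) = (x ∘ chainK x pk i) ∘ (fun n => hfun i (v (n + i))) := by
    intro v hv i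
    funext n
    have h1 : i ≤ v (n + i) := le_trans (Nat.le_add_left i n) hv.le_apply
    show x (d (v (n + i))) = x (chainK x pk i (hfun i (v (n + i))))
    exact congrArg x (hdiag i (v (n + i)) h1)
  have hwmono : ∀ (v : ℕ → ℕ), StrictMono v → ∀ i, StrictMono (fun n => hfun i (v (n + i))) := by
    intro v hv i a b hab
    exact (hhmono i) (hv (by omega))
  have key : ∀ (v : ℕ → ℕ), StrictMono v → ∀ i : ℕ,
      srad (x ∘ chainK x pk i) ≤ rad (x ∘ d ∘ v) ∧
        rad (x ∘ d ∘ v) < srad (x ∘ chainK x pk i) + 1 / (i + 1) := by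
    intro v hv i
    constructor
    · have e1 : rad (x ∘ d ∘ v) = rad (fun n => (x ∘ d ∘ v) (n + i)) :=
        (rad_shift (x ∘ d ∘ v) i).symm
      rw [e1, htail v hv i]
      exact srad_le hD _ (hwmono v hv i)
    · have e1 : rad (x ∘ d ∘ v) = rad (fun n => (x ∘ d ∘ v) (n + (i + 1))) :=
        (rad_shift (x ∘ d ∘ v) (i + 1)).symm
      rw [e1, htail v hv (i + 1)]
      have h2 : rad ((x ∘ chainK x pk (i + 1)) ∘ fun n => hfun (i + 1) (v (n + (i + 1)))) ≤
          rad (x ∘ chainK x pk (i + 1)) :=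
        rad_comp_le hD _ (hwmono v hv (i + 1)).tendsto_atTop
      have h3 : rad (x ∘ chainK x pk (i + 1)) < srad (x ∘ chainK x pk i) + 1 / (i + 1) :=
        hpklt (x ∘ chainK x pk i) i
      linarith
  have hradv : ∀ (v : ℕ → ℕ), StrictMono v → rad (x ∘ d ∘ v) = rad (x ∘ d) := by
    intro v hv
    have hido : ∀ i : ℕ,
        srad (x ∘ chainK x pk i) ≤ rad (x ∘ d) ∧
          rad (x ∘ d) < srad (x ∘ chainK x pk i) + 1 / (i + 1) := by
      intro i
      exact key id strictMono_id i
    apply le_antisymm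
    · refine le_of_forall_pos_le_add fun ε hε => ?_
      obtain ⟨i, hi⟩ := exists_nat_one_div_lt hε
      have h1 := (key v hv i).2
      have h2 := (hido i).1
      linarith
    · refine le_of_forall_pos_le_add fun ε hε => ?_
      obtain ⟨i, hi⟩ := exists_nat_one_div_lt hε
      have h1 := (hido i).2
      have h2 := (key v hv i).1
      linarith
  obtain ⟨c, hc⟩ := exists_center hD hdelpos hdel (x ∘ d)
  refine ⟨d, hdmono, c, ?_⟩
  apply polar_of_centers hD hdelpos hdel
  intro k hk z
  have h1 : Fl ((x ∘ d) ∘ k) c ≤ Fl (x ∘ d) c := Fl_comp_le hD (x ∘ d) c hk.tendsto_atTop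
  have h2 : Fl (x ∘ d) c ≤ rad (x ∘ d) := by
    refine le_csInf ⟨Fl (x ∘ d) ((x ∘ d) 0), ⟨_, rfl⟩⟩ ?_
    rintro _ ⟨w, rfl⟩
    exact hc w
  have h3 : rad (x ∘ d) = rad (x ∘ d ∘ k) := (hradv k hk).symm
  have h4 : rad (x ∘ d ∘ k) ≤ Fl (x ∘ d ∘ k) z := rad_le hD _ z
  exact le_trans h1 (le_trans h2 (le_trans (le_of_eq h3) h4))


end SRaux

/-- in a bounded complete uniform SR space, for a nonexpansive `T`,
the iterations sequence has a polar limit iff every polar limit of a subsequence of the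
iterations is a fixed point of `T`. -/
theorem stmt_16 [CompleteSpace E] (hBdd : Bornology.IsBounded (Set.univ : Set E))
    (hSR : IsUniformSR E) (x : E) (T : E → E)
    (hT : ∀ u v : E, dist (T u) (T v) ≤ dist u v) :
    (∃ p : E, PolarLim (fun n => T^[n] x) p) ↔
      (∀ k : ℕ → ℕ, StrictMono k → ∀ y : E, PolarLim (fun n => T^[k n] x) y → T y = y) := by
  obtain ⟨D, hDD⟩ := Metric.isBounded_iff.mp hBdd
  have hD' : ∀ a b : E, dist a b ≤ D := fun a b =>
    hDD (Set.mem_univ a) (Set.mem_univ b)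
  obtain ⟨del, hdelpos, hdel⟩ := SRaux.master hD' hSR
  set X : ℕ → E := fun n => T^[n] x with hX
  constructor
  · rintro ⟨p, hp⟩ k hk y hy
    have hy' : PolarLim (X ∘ k) y := hy
    have hyc : AsympCenter (X ∘ k) y := SRaux.center_of_polar hD' hy'
    have hpc : AsympCenter (X ∘ k) p := SRaux.centers_of_polar hD' hp hk
    have hyp : y = p := SRaux.unique_center hD' hdelpos hdel hyc hpc
    have hpc0 : AsympCenter X p := SRaux.center_of_polar hD' hp
    have hTp : AsympCenter X (T p) := by
      intro w
      have h1 : SRaux.Fl X (T p) ≤ SRaux.Fl X p := by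
        have e1 : SRaux.Fl X (T p) = SRaux.Fl (fun n => X (n + 1)) (T p) :=
          (SRaux.Fl_shift X (T p) 1).symm
        rw [e1]
        refine SRaux.Fl_mono2 hD' (Filter.Eventually.of_forall fun n => ?_)
        have e2 : X (n + 1) = T (X n) := Function.iterate_succ_apply' T n x
        rw [e2]
        exact hT (X n) p
      exact le_trans h1 (hpc0 w)
    have hTpp : T p = p := SRaux.unique_center hD' hdelpos hdel hTp hpc0
    rw [hyp, hTpp]
  · intro hfix
    have hcomp : ∀ (y : ℕ → E), ∃ k, StrictMono k ∧ ∃ p, PolarLim (y ∘ k) p :=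
      fun y => SRaux.exists_polar_subseq hD' hdelpos hdel y
    obtain ⟨k0, hk0, p, hp⟩ := hcomp X
    have hTp : T p = p := hfix k0 hk0 p hp
    have hmono : ∀ (q : E), T q = q → Antitone (fun n => dist (X n) q) := by
      intro q hq
      apply antitone_nat_of_succ_le
      intro n
      have e2 : X (n + 1) = T (X n) := Function.iterate_succ_apply' T n x
      calc dist (X (n + 1)) q = dist (T (X n)) (T q) := by rw [e2, hq]
        _ ≤ dist (X n) q := hT _ _
    have hconv : ∀ (q : E), T q = q →
        ∃ r : ℝ, Tendsto (fun n => dist (X n) q) atTop (nhds r) := by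
      intro q hq
      refine ⟨_, tendsto_atTop_ciInf (hmono q hq) ⟨0, ?_⟩⟩
      rintro _ ⟨n, rfl⟩
      exact dist_nonneg
    obtain ⟨r, hr⟩ := hconv p hTp
    refine ⟨p, ?_⟩
    intro z hz
    by_contra hcon
    push_neg at hcon
    have hfreq : ∀ N, ∃ n > N, dist (X n) z ≤ dist (X n) p := by
      intro N
      obtain ⟨n, hn1, hn2⟩ := hcon (N + 1)
      exact ⟨n, by omega, hn2⟩
    obtain ⟨k, hk, hkP⟩ := Nat.exists_strictMono_subsequence hfreq
    obtain ⟨m, hm, w, hw⟩ := hcomp (X ∘ k)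
    have hkm : StrictMono (k ∘ m) := hk.comp hm
    have hTw : T w = w := hfix (k ∘ m) hkm w hw
    obtain ⟨s, hs⟩ := hconv w hTw
    have hFp : SRaux.Fl (X ∘ (k ∘ m)) p = r := SRaux.Fl_tendsto (hr.comp hkm.tendsto_atTop)
    have hFw : SRaux.Fl (X ∘ (k ∘ m)) w = s := SRaux.Fl_tendsto (hs.comp hkm.tendsto_atTop)
    have hFp0 : SRaux.Fl (X ∘ k0) p = r := SRaux.Fl_tendsto (hr.comp hk0.tendsto_atTop)
    have hFw0 : SRaux.Fl (X ∘ k0) w = s := SRaux.Fl_tendsto (hs.comp hk0.tendsto_atTop)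
    have hpc0 : AsympCenter (X ∘ k0) p := SRaux.center_of_polar hD' hp
    have hwc : AsympCenter (X ∘ (k ∘ m)) w := SRaux.center_of_polar hD' hw
    have hrs1 : r ≤ s := by
      have h := hpc0 w
      have h' : SRaux.Fl (X ∘ k0) p ≤ SRaux.Fl (X ∘ k0) w := h
      linarith
    have hrs2 : s ≤ r := by
      have h' : SRaux.Fl (X ∘ (k ∘ m)) w ≤ SRaux.Fl (X ∘ (k ∘ m)) p := hwc p
      linarith
    have hFzle : SRaux.Fl (X ∘ (k ∘ m)) z ≤ r := by
      rw [← hFp]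
      refine SRaux.Fl_mono hD' (Filter.Eventually.of_forall fun n => ?_)
      exact hkP (m n)
    have hzc : AsympCenter (X ∘ (k ∘ m)) z := by
      intro u
      have h1 : SRaux.Fl (X ∘ (k ∘ m)) w ≤ SRaux.Fl (X ∘ (k ∘ m)) u := hwc u
      have h2 : SRaux.Fl (X ∘ (k ∘ m)) z ≤ SRaux.Fl (X ∘ (k ∘ m)) w := by
        rw [hFw]
        linarith
      exact le_trans h2 h1
    have hpc2 : AsympCenter (X ∘ (k ∘ m)) p := by
      intro u
      have h2 : SRaux.Fl (X ∘ (k ∘ m)) p ≤ SRaux.Fl (X ∘ (k ∘ m)) w := by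
        rw [hFp, hFw]
        linarith
      exact le_trans h2 (hwc u)
    exact hz (SRaux.unique_center hD' hdelpos hdel hzc hpc2)
end
end

section
/- Let (E,d) be a bounded complete uniform SR (Staples rotund) metric space, let x ∈ E, and let T : E → E be a nonexpansive map satisfying the PAR-condition at x. Then the iterations sequence (Tⁿ(x))_{n∈ℕ} has a polar limit which is a fixed point of T. -/
open Filter Metric ENNReal MeasureTheory

noncomputable section

variable {E : Type*} [MetricSpace E]

namespace Stmt17Aux


variable {E : Type*} [MetricSpace E]

/-- asymptotic radius of `u` at `y`. -/
noncomputable def asR (u : ℕ → E) (y : E) : ℝ :=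
  Filter.limsup (fun n => dist (u n) y) Filter.atTop

/-- minimal asymptotic radius. -/
noncomputable def minrad (u : ℕ → E) : ℝ := sInf (Set.range (asR u))

/-- infimum of minimal asymptotic radii over all subsequences. -/
noncomputable def subrad (u : ℕ → E) : ℝ :=
  sInf {r | ∃ φ : ℕ → ℕ, StrictMono φ ∧ minrad (u ∘ φ) = r}

section basic

variable {C : ℝ} (hC : ∀ a b : E, dist a b ≤ C) (u : ℕ → E) (y : E)
include hC

lemma bddA : IsBoundedUnder (· ≤ ·) atTop (fun n => dist (u n) y) :=
  isBoundedUnder_of ⟨C, fun n => hC _ _⟩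

omit hC in
lemma bddB : IsBoundedUnder (· ≥ ·) atTop (fun n => dist (u n) y) :=
  isBoundedUnder_of ⟨0, fun n => dist_nonneg⟩

lemma asR_nonneg : 0 ≤ asR u y :=
  le_limsup_of_frequently_le (Frequently.of_forall fun _ => dist_nonneg) (bddA hC u y)

lemma asR_le_of_eventually {b : ℝ} (h : ∀ᶠ n in atTop, dist (u n) y ≤ b) :
    asR u y ≤ b :=
  limsup_le_of_le (bddB u y).isCoboundedUnder_le h

lemma eventually_lt_of_asR_lt {b : ℝ} (h : asR u y < b) :
    ∀ᶠ n in atTop, dist (u n) y < b :=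
  eventually_lt_of_limsup_lt h (bddA hC u y)

variable [Nonempty E]

lemma minrad_le : minrad u ≤ asR u y :=
  csInf_le ⟨0, by rintro r ⟨z, rfl⟩; exact asR_nonneg hC u z⟩ ⟨y, rfl⟩

lemma minrad_nonneg : 0 ≤ minrad u :=
  le_csInf (Set.range_nonempty _) (by rintro r ⟨z, rfl⟩; exact asR_nonneg hC u z)

omit hC in
lemma exists_near_min {ε : ℝ} (hε : 0 < ε) : ∃ y, asR u y < minrad u + ε := by
  obtain ⟨r, ⟨z, rfl⟩, hr⟩ := exists_lt_of_csInf_lt (Set.range_nonempty (asR u))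
    (lt_add_of_pos_right (minrad u) hε)
  exact ⟨z, hr⟩

lemma asR_comp_le {φ : ℕ → ℕ} (hφ : StrictMono φ) : asR (u ∘ φ) y ≤ asR u y := by
  refine le_of_forall_pos_le_add fun ε hε => ?_
  have h := eventually_lt_of_asR_lt hC u y (lt_add_of_pos_right _ hε)
  obtain ⟨N, hN⟩ := eventually_atTop.1 h
  refine asR_le_of_eventually hC (u ∘ φ) y (eventually_atTop.2 ⟨N, fun n hn => ?_⟩)
  exact (hN (φ n) (hn.trans hφ.le_apply)).le

lemma minrad_comp_le {φ : ℕ → ℕ} (hφ : StrictMono φ) : minrad (u ∘ φ) ≤ minrad u := by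
  refine le_csInf (Set.range_nonempty _) ?_
  rintro r ⟨z, rfl⟩
  exact (minrad_le hC (u ∘ φ) z).trans (asR_comp_le hC u z hφ)

omit hC in
lemma asR_shift (m : ℕ) : asR (fun n => u (n + m)) y = asR u y := by
  show limsup (fun n => dist (u (n + m)) y) atTop = limsup (fun n => dist (u n) y) atTop
  exact limsup_nat_add (fun n => dist (u n) y) m

omit hC in
lemma minrad_shift (m : ℕ) : minrad (fun n => u (n + m)) = minrad u := by
  have : asR (fun n => u (n + m)) = asR u := funext fun z => asR_shift u z m
  simp only [minrad, this]

lemma subrad_bddBelow :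
    BddBelow {r | ∃ φ : ℕ → ℕ, StrictMono φ ∧ minrad (u ∘ φ) = r} := by
  refine ⟨0, ?_⟩
  rintro r ⟨φ, hφ, rfl⟩
  exact minrad_nonneg hC (u ∘ φ)

omit hC [Nonempty E] in
lemma subrad_nonempty :
    Set.Nonempty {r | ∃ φ : ℕ → ℕ, StrictMono φ ∧ minrad (u ∘ φ) = r} :=
  ⟨minrad u, id, strictMono_id, by rw [Function.comp_id]⟩

lemma subrad_le {φ : ℕ → ℕ} (hφ : StrictMono φ) : subrad u ≤ minrad (u ∘ φ) :=
  csInf_le (subrad_bddBelow hC u) ⟨φ, hφ, rfl⟩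

lemma subrad_mono {φ : ℕ → ℕ} (hφ : StrictMono φ) : subrad u ≤ subrad (u ∘ φ) := by
  refine le_csInf (subrad_nonempty (u ∘ φ)) ?_
  rintro r ⟨θ, hθ, rfl⟩
  exact csInf_le (subrad_bddBelow hC u) ⟨φ ∘ θ, hφ.comp hθ, rfl⟩

omit hC in
lemma exists_sub_near {ε : ℝ} (hε : 0 < ε) :
    ∃ φ : ℕ → ℕ, StrictMono φ ∧ minrad (u ∘ φ) < subrad u + ε := by
  obtain ⟨r, ⟨φ, hφ, rfl⟩, hr⟩ := exists_lt_of_csInf_lt (subrad_nonempty u)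
    (lt_add_of_pos_right (subrad u) hε)
  exact ⟨φ, hφ, hr⟩

end basic



variable {E : Type*} [MetricSpace E]

/-- Refined SR data: a modulus which is small relative to `r`, together with the
pointwise extraction of an approximate Chebyshev center. -/
def SRData (E : Type*) [MetricSpace E] (δf : ℝ → ℝ → ℝ) : Prop :=
  ∀ r dbar : ℝ, 0 < r → 0 < dbar →
    (0 < δf r dbar ∧ δf r dbar ≤ r / 2) ∧
    ∀ a b : E, dbar ≤ dist a b → ∃ w : E, ∀ z : E,
      dist z a ≤ r + δf r dbar → dist z b ≤ r + δf r dbar → dist z w ≤ r - δf r dbar / 2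

lemma srData (hSR : IsUniformSR E) : ∃ δf : ℝ → ℝ → ℝ, SRData E δf := by
  obtain ⟨δ, hδpos, hδ⟩ := hSR
  refine ⟨fun r d => min (δ r d) (r / 2), fun r d hr hd => ?_⟩
  have hpos : 0 < min (δ r d) (r / 2) := lt_min (hδpos r d hr hd) (by linarith)
  refine ⟨⟨hpos, min_le_right _ _⟩, fun a b hab => ?_⟩
  set δ' := min (δ r d) (r / 2) with hδ'
  have hδ'le : δ' ≤ δ r d := min_le_left _ _
  have h1 : chebyshevRadius (Metric.closedBall a (r + δ') ∩ Metric.closedBall b (r + δ')) ≤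
      ENNReal.ofReal (r - δ') := by
    have hsub : Metric.closedBall a (r + δ') ∩ Metric.closedBall b (r + δ') ⊆
        Metric.closedBall a (r + δ r d) ∩ Metric.closedBall b (r + δ r d) :=
      Set.inter_subset_inter
        (Metric.closedBall_subset_closedBall (by linarith))
        (Metric.closedBall_subset_closedBall (by linarith))
    have hmono : chebyshevRadius (Metric.closedBall a (r + δ') ∩ Metric.closedBall b (r + δ')) ≤
        chebyshevRadius (Metric.closedBall a (r + δ r d) ∩ Metric.closedBall b (r + δ r d)) := by
      refine iInf_mono fun z => ?_
      exact iSup_le_iSup_of_subset hsub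
    exact hmono.trans ((hδ r d hr hd a b hab).trans (ENNReal.ofReal_le_ofReal (by linarith)))
  have h2 : chebyshevRadius (Metric.closedBall a (r + δ') ∩ Metric.closedBall b (r + δ')) <
      ENNReal.ofReal (r - δ' / 2) := by
    refine h1.trans_lt ?_
    rw [ENNReal.ofReal_lt_ofReal_iff (by nlinarith [min_le_right (δ r d) (r/2)] : (0:ℝ) < r - δ'/2)]
    linarith
  obtain ⟨w, hw⟩ := iInf_lt_iff.mp h2
  refine ⟨w, fun z hza hzb => ?_⟩
  have hz : z ∈ Metric.closedBall a (r + δ') ∩ Metric.closedBall b (r + δ') :=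
    ⟨Metric.mem_closedBall.2 hza, Metric.mem_closedBall.2 hzb⟩
  have : edist w z < ENNReal.ofReal (r - δ' / 2) :=
    lt_of_le_of_lt (le_iSup₂_of_le z hz le_rfl) hw
  rw [edist_dist, ENNReal.ofReal_lt_ofReal_iff (by nlinarith [min_le_right (δ r d) (r/2)])] at this
  rw [dist_comm] at this
  exact this.le

section M12

variable {E : Type*} [MetricSpace E] {C : ℝ} {δf : ℝ → ℝ → ℝ}

/-- Uniqueness of minimizers of the asymptotic radius, via the SR property. -/
lemma center_unique (hC : ∀ a b : E, dist a b ≤ C) (hD : SRData E δf) (u : ℕ → E)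
    {a b : E} {r : ℝ} (ha : asR u a ≤ r) (hb : asR u b ≤ r) (hmin : ∀ y, r ≤ asR u y) :
    a = b := by
  by_contra hne
  have hd : 0 < dist a b := dist_pos.2 hne
  have hr0 : 0 ≤ r := (asR_nonneg hC u a).trans ha
  rcases hr0.eq_or_lt with hr | hr
  · -- r = 0 : both are strong limits
    have h1 := eventually_lt_of_asR_lt hC u a (ha.trans_lt (by linarith : r < dist a b / 2))
    have h2 := eventually_lt_of_asR_lt hC u b (hb.trans_lt (by linarith : r < dist a b / 2))
    obtain ⟨n, hn1, hn2⟩ := (h1.and h2).exists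
    have := dist_triangle_left a b (u n)
    linarith
  · -- r > 0 : SR argument
    obtain ⟨⟨hδ0, hδr⟩, hball⟩ := hD r (dist a b) hr hd
    obtain ⟨w, hw⟩ := hball a b le_rfl
    have h1 := eventually_lt_of_asR_lt hC u a (ha.trans_lt (lt_add_of_pos_right r hδ0))
    have h2 := eventually_lt_of_asR_lt hC u b (hb.trans_lt (lt_add_of_pos_right r hδ0))
    have h3 : asR u w ≤ r - δf r (dist a b) / 2 := by
      refine asR_le_of_eventually hC u w ?_
      filter_upwards [h1, h2] with n hn1 hn2
      exact hw (u n) hn1.le hn2.le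
    have := hmin w
    linarith

/-- Existence of a point attaining the minimal asymptotic radius. -/
lemma exists_center [CompleteSpace E] (hC : ∀ a b : E, dist a b ≤ C)
    (hD : SRData E δf) (u : ℕ → E) : ∃ p : E, asR u p = minrad u := by
  haveI : Nonempty E := ⟨u 0⟩
  set s := minrad u with hs
  have hs0 : 0 ≤ s := minrad_nonneg hC u
  have hz : ∀ k : ℕ, ∃ y : E, asR u y < s + 1 / (k + 1) :=
    fun k => exists_near_min u (by positivity)
  choose z hzs using hz
  have hev : ∀ k : ℕ, ∀ᶠ n in atTop, dist (u n) (z k) < s + 1 / (k + 1) :=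
    fun k => eventually_lt_of_asR_lt hC u (z k) (hzs k)
  have hcauchy : CauchySeq z := by
    rw [Metric.cauchySeq_iff]
    intro θ hθ
    rcases hs0.eq_or_lt with hs1 | hs1
    · -- s = 0
      obtain ⟨N, hN⟩ := exists_nat_one_div_lt (by linarith : (0:ℝ) < θ / 2)
      refine ⟨N, fun k hk l hl => ?_⟩
      have hk1 : (1:ℝ) / (k + 1) ≤ 1 / (N + 1) := by
        apply one_div_le_one_div_of_le (by positivity)
        exact_mod_cast by omega
      have hl1 : (1:ℝ) / (l + 1) ≤ 1 / (N + 1) := by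
        apply one_div_le_one_div_of_le (by positivity)
        exact_mod_cast by omega
      obtain ⟨n, hn1, hn2⟩ := ((hev k).and (hev l)).exists
      have := dist_triangle_left (z k) (z l) (u n)
      simp only [← hs1, zero_add] at hn1 hn2
      linarith
    · -- s > 0
      obtain ⟨⟨hδ0, hδr⟩, hball⟩ := hD s θ hs1 hθ
      set δ := δf s θ
      obtain ⟨N, hN⟩ := exists_nat_one_div_lt hδ0
      refine ⟨N, fun k hk l hl => ?_⟩
      by_contra hcon
      push_neg at hcon
      obtain ⟨w, hw⟩ := hball (z k) (z l) hcon
      have hk1 : (1:ℝ) / (k + 1) < δ := lt_of_le_of_lt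
        (one_div_le_one_div_of_le (by positivity) (by exact_mod_cast by omega)) hN
      have hl1 : (1:ℝ) / (l + 1) < δ := lt_of_le_of_lt
        (one_div_le_one_div_of_le (by positivity) (by exact_mod_cast by omega)) hN
      have h3 : asR u w ≤ s - δ / 2 := by
        refine asR_le_of_eventually hC u w ?_
        filter_upwards [hev k, hev l] with n hn1 hn2
        exact hw (u n) (by linarith) (by linarith)
      have := minrad_le hC u w
      rw [← hs] at this
      linarith
  obtain ⟨p, hp⟩ := cauchySeq_tendsto_of_complete hcauchy
  refine ⟨p, le_antisymm ?_ (minrad_le hC u p)⟩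
  refine le_of_forall_pos_le_add fun ε hε => ?_
  obtain ⟨N0, hN0⟩ := exists_nat_one_div_lt (by linarith : (0:ℝ) < ε / 2)
  obtain ⟨N1, hN1⟩ := (Metric.tendsto_atTop.mp hp) (ε / 2) (by linarith)
  set k := max N0 N1
  have hk0 : (1:ℝ) / (k + 1) < ε / 2 := lt_of_le_of_lt
    (one_div_le_one_div_of_le (by positivity)
      (by exact_mod_cast Nat.succ_le_succ (le_max_left N0 N1))) hN0
  have hk1 : dist (z k) p < ε / 2 := hN1 k (le_max_right N0 N1)
  refine asR_le_of_eventually hC u p ?_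
  filter_upwards [hev k] with n hn
  calc dist (u n) p ≤ dist (u n) (z k) + dist (z k) p := dist_triangle _ _ _
    _ ≤ s + ε := by linarith

end M12

section M4

variable {E : Type*} [MetricSpace E] {C : ℝ}

/-- Existence of a subsequence along which the minimal asymptotic radius is stable
under passing to further subsequences (diagonal argument). -/
lemma exists_stable (hC : ∀ a b : E, dist a b ≤ C) (u : ℕ → E) :
    ∃ ψ : ℕ → ℕ, StrictMono ψ ∧
      ∀ φ : ℕ → ℕ, StrictMono φ → minrad (u ∘ ψ ∘ φ) = minrad (u ∘ ψ) := by
  haveI : Nonempty E := ⟨u 0⟩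
  have hex : ∀ (ψ : ℕ → ℕ) (m : ℕ), ∃ φ : ℕ → ℕ, StrictMono φ ∧
      minrad ((u ∘ ψ) ∘ φ) < subrad (u ∘ ψ) + 1 / (m + 1) :=
    fun ψ m => exists_sub_near (u ∘ ψ) (by positivity)
  choose F hF1 hF2 using hex
  -- the chain of nested subsequences
  set seqs : ℕ → (ℕ → ℕ) := fun m => Nat.rec id (fun m prev => prev ∘ F prev m) m with hseqs
  have seqs_succ : ∀ m, seqs (m + 1) = seqs m ∘ F (seqs m) m := fun m => rfl
  have seqs_mono : ∀ m, StrictMono (seqs m) := by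
    intro m
    induction m with
    | zero => exact strictMono_id
    | succ m ih => exact ih.comp (hF1 _ _)
  -- remainder maps : seqs (m + j) = seqs m ∘ rest m j
  set rest : ℕ → ℕ → (ℕ → ℕ) :=
    fun m j => Nat.rec id (fun j prev => prev ∘ F (seqs (m + j)) (m + j)) j with hrest
  have rest_succ : ∀ m j, rest m (j + 1) = rest m j ∘ F (seqs (m + j)) (m + j) :=
    fun m j => rfl
  have rest_mono : ∀ m j, StrictMono (rest m j) := by
    intro m j
    induction j with
    | zero => exact strictMono_id
    | succ j ih => exact ih.comp (hF1 _ _)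
  have rest_eq : ∀ m j, seqs (m + j) = seqs m ∘ rest m j := by
    intro m j
    induction j with
    | zero => rfl
    | succ j ih =>
        rw [show m + (j + 1) = (m + j) + 1 from rfl, seqs_succ (m + j), rest_succ]
        set G := F (seqs (m + j)) (m + j) with hG
        rw [ih]
        rfl
  have rest_add : ∀ m k l, rest m (k + l) = rest m k ∘ rest (m + k) l := by
    intro m k l
    induction l with
    | zero => rfl
    | succ l ih =>
        rw [show k + (l + 1) = (k + l) + 1 from rfl, rest_succ, ih,
          rest_succ (m + k) l, show m + (k + l) = m + k + l by ring]
        rfl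
  -- the diagonal
  set D : ℕ → ℕ := fun n => seqs n n with hD
  have Dmono : StrictMono D := by
    apply strictMono_nat_of_lt_succ
    intro n
    have h1 : seqs n n < seqs n (n + 1) := (seqs_mono n) (lt_add_one n)
    have h2 : seqs n (n + 1) ≤ seqs n (F (seqs n) n (n + 1)) :=
      (seqs_mono n).monotone (hF1 (seqs n) n).le_apply
    calc D n = seqs n n := rfl
      _ < seqs n (F (seqs n) n (n + 1)) := lt_of_lt_of_le h1 h2
      _ = D (n + 1) := by
          show seqs n (F (seqs n) n (n + 1)) = seqs (n + 1) (n + 1)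
          rw [seqs_succ n]; rfl
  -- tail property: for every strict mono φ and m, the m-tail of u ∘ D ∘ φ is a
  -- subsequence of u ∘ seqs m
  have tail : ∀ (m : ℕ) (φ : ℕ → ℕ), StrictMono φ →
      ∃ θ : ℕ → ℕ, StrictMono θ ∧
        ∀ j, u (D (φ (j + m))) = ((u ∘ seqs m) ∘ θ) j := by
    intro m φ hφ
    refine ⟨fun j => rest m (φ (j + m) - m) (φ (j + m)), ?_, ?_⟩
    · intro j j' hjj'
      show rest m (φ (j + m) - m) (φ (j + m)) < rest m (φ (j' + m) - m) (φ (j' + m))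
      have hmj : m ≤ φ (j + m) := le_trans (Nat.le_add_left m j) hφ.le_apply
      have hmj' : m ≤ φ (j' + m) := le_trans (Nat.le_add_left m j') hφ.le_apply
      have hlt : φ (j + m) < φ (j' + m) := hφ (by omega)
      set k := φ (j + m) - m
      set k' := φ (j' + m) - m
      have hkk' : k ≤ k' := by omega
      have : rest m k' = rest m k ∘ rest (m + k) (k' - k) := by
        rw [← rest_add m k (k' - k), Nat.add_sub_cancel' hkk']
      rw [this]
      simp only [Function.comp_apply]
      calc rest m k (φ (j + m)) < rest m k (φ (j' + m)) := (rest_mono m k) hlt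
        _ ≤ rest m k (rest (m + k) (k' - k) (φ (j' + m))) :=
          (rest_mono m k).monotone (rest_mono (m + k) (k' - k)).le_apply
    · intro j
      have hmj : m ≤ φ (j + m) := le_trans (Nat.le_add_left m j) hφ.le_apply
      obtain ⟨k, hk⟩ : ∃ k, φ (j + m) = m + k := ⟨φ (j + m) - m, by omega⟩
      simp only [Function.comp_apply, hk, Nat.add_sub_cancel_left]
      have h1 : D (m + k) = seqs m (rest m k (m + k)) := by
        show seqs (m + k) (m + k) = _
        rw [rest_eq m k]; rfl
      rw [h1]
  -- lower and upper bounds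
  have low : ∀ (φ : ℕ → ℕ), StrictMono φ → ∀ m,
      subrad (u ∘ seqs m) ≤ minrad (u ∘ D ∘ φ) := by
    intro φ hφ m
    obtain ⟨θ, hθ, heq⟩ := tail m φ hφ
    have h1 : minrad (fun j => (u ∘ D ∘ φ) (j + m)) = minrad (u ∘ D ∘ φ) :=
      minrad_shift (u ∘ D ∘ φ) m
    have h2 : (fun j => (u ∘ D ∘ φ) (j + m)) = (u ∘ seqs m) ∘ θ := funext fun j => heq j
    rw [← h1, h2]
    exact subrad_le hC (u ∘ seqs m) hθ
  have high : ∀ m, minrad (u ∘ D) ≤ minrad (u ∘ seqs (m + 1)) := by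
    intro m
    obtain ⟨θ, hθ, heq⟩ := tail (m + 1) id strictMono_id
    have h1 : minrad (fun j => (u ∘ D) (j + (m + 1))) = minrad (u ∘ D) :=
      minrad_shift (u ∘ D) (m + 1)
    have h2 : (fun j => (u ∘ D) (j + (m + 1))) = (u ∘ seqs (m + 1)) ∘ θ :=
      funext fun j => heq j
    rw [← h1, h2]
    exact minrad_comp_le hC (u ∘ seqs (m + 1)) hθ
  have hstep : ∀ m, minrad (u ∘ seqs (m + 1)) < subrad (u ∘ seqs m) + 1 / (m + 1) := by
    intro m
    have := hF2 (seqs m) m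
    rw [seqs_succ m]
    exact this
  refine ⟨D, Dmono, fun φ hφ => ?_⟩
  have hle : minrad (u ∘ D ∘ φ) ≤ minrad (u ∘ D) := minrad_comp_le hC (u ∘ D) hφ
  refine le_antisymm hle (le_of_forall_pos_le_add fun ε hε => ?_)
  obtain ⟨m, hm⟩ := exists_nat_one_div_lt hε
  have h1 := low φ hφ m
  have h2 := high m
  have h3 := hstep m
  have : (1:ℝ) / (m + 1) < ε := hm
  linarith

end M4

section M5

variable {E : Type*} [MetricSpace E] {C : ℝ} {δf : ℝ → ℝ → ℝ}

/-- The asymptotic center of a radius-stable sequence is a polar limit of it. -/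
lemma polarlim_of_stable (hC : ∀ a b : E, dist a b ≤ C) (hD : SRData E δf) (v : ℕ → E)
    (hstab : ∀ φ : ℕ → ℕ, StrictMono φ → minrad (v ∘ φ) = minrad v)
    {q : E} (hq : asR v q = minrad v) : PolarLim v q := by
  intro z hz
  by_contra hcon
  push_neg at hcon
  have hfreq : ∃ᶠ n in atTop, dist (v n) z ≤ dist (v n) q := by
    refine frequently_atTop.2 fun N => ?_
    obtain ⟨n, hn1, hn2⟩ := hcon N
    exact ⟨n, hn1, hn2⟩
  haveI : Nonempty E := ⟨q⟩
  have hs0 : 0 ≤ minrad v := minrad_nonneg hC v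
  have hdq : 0 < dist q z := dist_pos.2 (Ne.symm hz)
  rcases hs0.eq_or_lt with hs | hs
  · have h1 : asR v q < dist q z / 2 := by rw [hq, ← hs]; linarith
    have h2 := eventually_lt_of_asR_lt hC v q h1
    obtain ⟨n, hn1, hn2⟩ := (hfreq.and_eventually h2).exists
    have h3 := dist_triangle q (v n) z
    rw [dist_comm q (v n)] at h3
    linarith
  · obtain ⟨⟨hδ0, hδr⟩, hball⟩ := hD (minrad v) (dist q z) hs hdq
    set δ := δf (minrad v) (dist q z) with hδ
    obtain ⟨w, hw⟩ := hball q z le_rfl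
    have h2 := eventually_lt_of_asR_lt hC v q
      (by rw [hq]; exact lt_add_of_pos_right _ hδ0)
    have hfreq2 : ∃ᶠ n in atTop, dist (v n) w ≤ minrad v - δ / 2 := by
      refine (hfreq.and_eventually h2).mono ?_
      rintro n ⟨hn1, hn2⟩
      exact hw (v n) hn2.le (hn1.trans hn2.le)
    obtain ⟨φ, hφ, hφw⟩ := extraction_of_frequently_atTop hfreq2
    have h3 : asR (v ∘ φ) w ≤ minrad v - δ / 2 :=
      asR_le_of_eventually hC (v ∘ φ) w (Eventually.of_forall hφw)
    have h4 : minrad (v ∘ φ) ≤ minrad v - δ / 2 := (minrad_le hC (v ∘ φ) w).trans h3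
    rw [hstab φ hφ] at h4
    linarith

end M5

end Stmt17Aux

open Stmt17Aux

/-- in a bounded complete uniform SR space, if `T` is nonexpansive and
satisfies the PAR-condition at `x`, then the iterations sequence polarly converges to a
fixed point of `T`. -/
theorem stmt_17 [CompleteSpace E] (hBdd : Bornology.IsBounded (Set.univ : Set E))
    (hSR : IsUniformSR E) (x : E) (T : E → E)
    (hT : ∀ u v : E, dist (T u) (T v) ≤ dist u v)
    (hPAR : ∀ y : E, ∀ k : ℕ → ℕ, StrictMono k → (∀ n, 1 ≤ k n) →
      PolarLim (fun n => T^[k n] x) y →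
      ∀ ε : ℝ, 0 < ε → ∃ N : ℕ, ∀ n ≥ N,
        dist (T^[k n - 1] x) y < dist (T^[k n] x) y + ε) :
    ∃ p : E, PolarLim (fun n => T^[n] x) p ∧ T p = p := by
  obtain ⟨C, hC'⟩ := Metric.isBounded_iff.mp hBdd
  have hC : ∀ a b : E, dist a b ≤ C := fun a b => hC' (Set.mem_univ a) (Set.mem_univ b)
  obtain ⟨δf, hD⟩ := srData hSR
  haveI : Nonempty E := ⟨x⟩
  set u : ℕ → E := fun n => T^[n] x with hu
  obtain ⟨p, hp⟩ := exists_center hC hD u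
  set rstar := minrad u with hrstar
  have hmin : ∀ y, rstar ≤ asR u y := fun y => minrad_le hC u y
  have hr0 : 0 ≤ rstar := minrad_nonneg hC u
  -- `p` is a fixed point
  have hTp : T p = p := by
    have h1 : asR u (T p) ≤ rstar := by
      have hshift : asR u (T p) = asR (fun n => u (n + 1)) (T p) :=
        (asR_shift u (T p) 1).symm
      rw [hshift]
      have hle : ∀ n, dist (u (n + 1)) (T p) ≤ dist (u n) p := by
        intro n
        have he : u (n + 1) = T (u n) := Function.iterate_succ_apply' T n x
        rw [he]
        exact hT (u n) p
      have h2 := limsup_le_limsup (Eventually.of_forall hle)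
        ((bddB (fun n => u (n + 1)) (T p)).isCoboundedUnder_le) (bddA hC u p)
      calc asR (fun n => u (n + 1)) (T p) ≤ asR u p := h2
        _ = rstar := hp
    exact center_unique hC hD u h1 hp.le hmin
  -- distances to a fixed point are nonincreasing, hence convergent
  have key_mono : ∀ q : E, T q = q → ∀ n, dist (u (n + 1)) q ≤ dist (u n) q := by
    intro q hq n
    have he : u (n + 1) = T (u n) := Function.iterate_succ_apply' T n x
    rw [he]
    conv_lhs => rw [← hq]
    exact hT (u n) q
  have tendsto_fix : ∀ q : E, T q = q →
      Tendsto (fun n => dist (u n) q) atTop (nhds (asR u q)) := by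
    intro q hq
    have hanti : Antitone (fun n => dist (u n) q) := antitone_nat_of_succ_le (key_mono q hq)
    have hbdd : BddBelow (Set.range fun n => dist (u n) q) :=
      ⟨0, by rintro r ⟨n, rfl⟩; exact dist_nonneg⟩
    have ht := tendsto_atTop_ciInf hanti hbdd
    have h2 : asR u q = ⨅ i, dist (u i) q := ht.limsup_eq
    rw [h2]
    exact ht
  -- Claim A : strong lower bound on liminf for every point
  have claimA : ∀ y : E, rstar ≤ liminf (fun n => dist (u n) y) atTop := by
    intro y
    by_contra hlt
    push_neg at hlt
    set L := liminf (fun n => dist (u n) y) atTop with hL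
    set b := (L + rstar) / 2 with hb
    have hb1 : L < b := by rw [hb]; linarith
    have hb2 : b < rstar := by rw [hb]; linarith
    have hfreq : ∃ᶠ n in atTop, dist (u n) y < b :=
      frequently_lt_of_liminf_lt ((bddA hC u y).isCoboundedUnder_ge) hb1
    have hfreq2 : ∃ᶠ n in atTop, dist (u n) y < b ∧ 1 ≤ n :=
      hfreq.and_eventually (eventually_ge_atTop 1)
    obtain ⟨φ, hφ, hφP⟩ := extraction_of_frequently_atTop hfreq2
    obtain ⟨ψ, hψ, hstab⟩ := exists_stable hC (u ∘ φ)
    set K : ℕ → ℕ := φ ∘ ψ with hK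
    have hKmono : StrictMono K := hφ.comp hψ
    have hK1 : ∀ n, 1 ≤ K n := fun n => (hφP (ψ n)).2
    set v : ℕ → E := u ∘ K with hv
    have hstab' : ∀ θ : ℕ → ℕ, StrictMono θ → minrad (v ∘ θ) = minrad v :=
      fun θ hθ => hstab θ hθ
    have hsb : minrad v ≤ b := by
      have h1 : asR v y ≤ b :=
        asR_le_of_eventually hC v y (Eventually.of_forall fun n => (hφP (ψ n)).1.le)
      exact (minrad_le hC v y).trans h1
    have hs_lt : minrad v < rstar := lt_of_le_of_lt hsb hb2
    obtain ⟨q, hq⟩ := exists_center hC hD v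
    have hpolar : PolarLim v q := polarlim_of_stable hC hD v hstab' hq
    have hpolar' : PolarLim (fun n => T^[K n] x) q := hpolar
    have hTq : T q = q := by
      have h1 : asR v (T q) ≤ minrad v := by
        refine le_of_forall_pos_le_add fun ε hε => ?_
        obtain ⟨N, hN⟩ := hPAR q K hKmono hK1 hpolar' (ε / 2) (by linarith)
        have h2 : ∀ᶠ n in atTop, dist (v n) q < minrad v + ε / 2 :=
          eventually_lt_of_asR_lt hC v q (by rw [hq]; linarith)
        refine asR_le_of_eventually hC v (T q) ?_
        filter_upwards [h2, eventually_ge_atTop N] with n hn2 hnN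
        have e1 : T^[K n] x = T (T^[K n - 1] x) := by
          conv_lhs => rw [show K n = (K n - 1) + 1 by have := hK1 n; omega]
          exact Function.iterate_succ_apply' T (K n - 1) x
        have e2 : dist (v n) (T q) ≤ dist (T^[K n - 1] x) q := by
          show dist (T^[K n] x) (T q) ≤ _
          rw [e1]
          exact hT _ _
        have e3 := hN n hnN
        have e4 : dist (T^[K n] x) q = dist (v n) q := rfl
        rw [e4] at e3
        have e5 : dist (v n) (T q) < minrad v + ε :=
          calc dist (v n) (T q) ≤ dist (T^[K n - 1] x) q := e2
            _ < dist (v n) q + ε / 2 := e3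
            _ ≤ minrad v + ε := by linarith
        exact e5.le
      exact center_unique hC hD v h1 hq.le (fun z => minrad_le hC v z)
    have hconvq := tendsto_fix q hTq
    have hsubconv : Tendsto (fun n => dist (v n) q) atTop (nhds (asR u q)) :=
      hconvq.comp hKmono.tendsto_atTop
    have h6 : asR v q = asR u q := hsubconv.limsup_eq
    have h5 : rstar ≤ asR u q := hmin q
    rw [hq] at h6
    linarith
  -- `p` is a polar limit of the iteration sequence
  have hconvp : Tendsto (fun n => dist (u n) p) atTop (nhds rstar) := by
    have h := tendsto_fix p hTp
    rwa [hp] at h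
  refine ⟨p, ?_, hTp⟩
  intro y hy
  by_contra hcon
  push_neg at hcon
  have hfreq : ∃ᶠ n in atTop, dist (u n) y ≤ dist (u n) p := by
    refine frequently_atTop.2 fun N => ?_
    obtain ⟨n, hn1, hn2⟩ := hcon N
    exact ⟨n, hn1, hn2⟩
  have hdp : 0 < dist p y := dist_pos.2 (Ne.symm hy)
  rcases hr0.eq_or_lt with hr | hr
  · have h2 : ∀ᶠ n in atTop, dist (u n) p < dist p y / 2 :=
      hconvp.eventually_lt_const (by rw [← hr]; linarith)
    obtain ⟨n, hn1, hn2⟩ := (hfreq.and_eventually h2).exists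
    have h3 := dist_triangle p (u n) y
    rw [dist_comm p (u n)] at h3
    linarith
  · obtain ⟨⟨hδ0, hδr⟩, hball⟩ := hD rstar (dist p y) hr hdp
    set δ := δf rstar (dist p y) with hδ
    obtain ⟨w, hw⟩ := hball p y le_rfl
    have h2 : ∀ᶠ n in atTop, dist (u n) p < rstar + δ :=
      hconvp.eventually_lt_const (by linarith)
    have hfreq2 : ∃ᶠ n in atTop, dist (u n) w ≤ rstar - δ / 2 := by
      refine (hfreq.and_eventually h2).mono ?_
      rintro n ⟨hn1, hn2⟩
      exact hw (u n) hn2.le (hn1.trans hn2.le)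
    have h3 : liminf (fun n => dist (u n) w) atTop ≤ rstar - δ / 2 :=
      liminf_le_of_frequently_le hfreq2 (bddB u w)
    have h4 := claimA w
    linarith

end
end

section
/- Let H be a real Hilbert space, let (x_n) be a sequence in H and let x ∈ H. Then x is a polar limit of (x_n) (with respect to the norm-induced metric) if and only if (x_n) converges weakly to x, i.e. ⟨x_n − x, v⟩ → 0 for every v ∈ H. -/
open Filter Metric ENNReal MeasureTheory

noncomputable section

variable {E : Type*} [MetricSpace E]

lemma dist_lt_dist_iff_inner {H : Type*} [NormedAddCommGroup H] [InnerProductSpace ℝ H]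
    (a p y : H) :
    dist a p < dist a y ↔ 0 < ‖p - y‖ ^ 2 + 2 * (inner ℝ (a - p) (p - y) : ℝ) := by
  have h : a - y = (a - p) + (p - y) := by abel
  have hexp : ‖a - y‖ ^ 2 = ‖a - p‖ ^ 2 + 2 * (inner ℝ (a - p) (p - y) : ℝ) + ‖p - y‖ ^ 2 := by
    rw [h, @norm_add_sq_real]
  rw [dist_eq_norm, dist_eq_norm]
  constructor
  · intro hlt
    nlinarith [norm_nonneg (a - p), norm_nonneg (a - y)]
  · intro hpos
    have hsq : ‖a - p‖ ^ 2 < ‖a - y‖ ^ 2 := by nlinarith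
    exact lt_of_pow_lt_pow_left₀ 2 (norm_nonneg _) hsq

/-- in a real Hilbert space, polar convergence coincides with weak
convergence. -/
theorem stmt_18 {H : Type*} [NormedAddCommGroup H] [InnerProductSpace ℝ H]
    [CompleteSpace H] (x : ℕ → H) (p : H) :
    PolarLim x p ↔
      ∀ v : H, Filter.Tendsto (fun n => (inner ℝ (x n - p) v : ℝ)) Filter.atTop (nhds 0) := by
  constructor
  · intro hpol v
    rw [Metric.tendsto_atTop]
    intro ε hε
    rcases eq_or_ne v 0 with rfl | hv
    · exact ⟨0, fun n _ => by simpa [dist_eq_norm] using hε⟩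
    · have hv' : (0:ℝ) < ‖v‖ := norm_pos_iff.mpr hv
      set t : ℝ := ε / ‖v‖ ^ 2 with ht
      have htpos : 0 < t := div_pos hε (by positivity)
      have htv : t • v ≠ 0 := smul_ne_zero (ne_of_gt htpos) hv
      have hteq : t * ‖v‖ ^ 2 = ε := by
        rw [ht, div_mul_cancel₀ _ (by positivity)]
      obtain ⟨M₁, hM₁⟩ := hpol (p - t • v) (by intro h; exact htv (sub_eq_self.mp h))
      obtain ⟨M₂, hM₂⟩ := hpol (p + t • v) (by intro h; exact htv (add_eq_left.mp h))
      refine ⟨max M₁ M₂, fun n hn => ?_⟩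
      have h1 := (dist_lt_dist_iff_inner (x n) p (p - t • v)).mp
        (hM₁ n (le_trans (le_max_left _ _) hn))
      have h2 := (dist_lt_dist_iff_inner (x n) p (p + t • v)).mp
        (hM₂ n (le_trans (le_max_right _ _) hn))
      have e1 : p - (p - t • v) = t • v := by abel
      have e2 : p - (p + t • v) = -(t • v) := by abel
      rw [e1] at h1
      rw [e2] at h2
      have hn1 : ‖t • v‖ ^ 2 = t ^ 2 * ‖v‖ ^ 2 := by
        rw [norm_smul]; simp [abs_of_pos htpos, mul_pow]
      have hi1 : (inner ℝ (x n - p) (t • v) : ℝ) = t * inner ℝ (x n - p) v :=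
        real_inner_smul_right _ _ _
      have hi2 : (inner ℝ (x n - p) (-(t • v)) : ℝ) = -(t * inner ℝ (x n - p) v) := by
        rw [inner_neg_right, hi1]
      rw [hn1, hi1] at h1
      rw [norm_neg, hn1, hi2] at h2
      rw [Real.dist_eq, sub_zero, abs_lt]
      constructor
      · nlinarith
      · nlinarith
  · intro hw y hy
    have hpy : (0:ℝ) < ‖p - y‖ := by
      rw [norm_pos_iff, sub_ne_zero]; exact fun h => hy h.symm
    have := (Metric.tendsto_atTop.mp (hw (p - y))) (‖p - y‖ ^ 2 / 2) (by positivity)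
    obtain ⟨N, hN⟩ := this
    refine ⟨N, fun n hn => ?_⟩
    rw [dist_lt_dist_iff_inner]
    have h := hN n hn
    rw [Real.dist_eq, sub_zero, abs_lt] at h
    nlinarith [h.1]
end
end
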